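/- arXiv:2603.23434 — 3 statements merged into one kernel-verified Lean document; each statement's English description precedes it below -/
import Mathlib

section
/- Let G be a finite connected cubic graph and let (I1,I2) be a pair of disjoint independent sets satisfying Conditions (I) and (II). If three red vertices u, v, w are all adjacent in G to one common vertex x ∈ I1 ∪ I2, then every vertex y ∉ {u,v,w} with min(d(y,u), d(y,v), d(y,w)) ≤ 2 belongs to I1 ∪ I2; moreover {u,v,w} is the vertex set of a connected component of H in which u, v, w are pairwise adjacent (a triangle component of H). -/
open SimpleGraph

variable {V : Type*}

/-- A finset `I` is an independent set of `G`. -/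
def FinsetIndep (G : SimpleGraph V) (I : Finset V) : Prop :=
  ∀ u ∈ I, ∀ v ∈ I, ¬ G.Adj u v

/-- Condition (I): `|I1| + |I2|` is maximum among all pairs of disjoint
independent sets of `G`. -/
def CondI (G : SimpleGraph V) (I1 I2 : Finset V) : Prop :=
  ∀ J1 J2 : Finset V, Disjoint J1 J2 → FinsetIndep G J1 → FinsetIndep G J2 →
    J1.card + J2.card ≤ I1.card + I2.card

/-- The set of red vertices: the vertices outside `I1 ∪ I2`. -/
def redSet (I1 I2 : Finset V) : Set V := {v | v ∉ I1 ∧ v ∉ I2}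

/-- The number of connected components of the subgraph of `G` induced on the
red vertices. -/
noncomputable def numRedComp (G : SimpleGraph V) (I1 I2 : Finset V) : ℕ :=
  Nat.card ((G.induce (redSet I1 I2)).ConnectedComponent)

/-- Condition (II): subject to Condition (I), the number of connected
components of the subgraph induced on the red vertices is minimum. -/
def CondII (G : SimpleGraph V) (I1 I2 : Finset V) : Prop :=
  ∀ J1 J2 : Finset V, Disjoint J1 J2 → FinsetIndep G J1 → FinsetIndep G J2 →
    CondI G J1 J2 → numRedComp G I1 I2 ≤ numRedComp G J1 J2

/-- The auxiliary graph `H` on the red vertices: two distinct red vertices are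
adjacent iff their distance in `G` is at most 2. -/
def Hgraph (G : SimpleGraph V) (I1 I2 : Finset V) : SimpleGraph (redSet I1 I2) where
  Adj x y := x ≠ y ∧ G.edist (x : V) (y : V) ≤ 2
  symm := ⟨by
    rintro x y ⟨hne, hd⟩
    exact ⟨hne.symm, by rwa [SimpleGraph.edist_comm]⟩⟩
  loopless := ⟨by rintro x ⟨hne, -⟩; exact hne rfl⟩


section AuxiliaryLemmas

set_option linter.unusedVariables false
set_option linter.unusedSectionVars false


private lemma reach_down {G : SimpleGraph V} {T : Set V} {t : V}
    (hiso : ∀ s ∈ T, ¬ G.Adj t s) :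
    ∀ {a b : T} (_ : (G.induce T).Walk a b) (ha : (a : V) ≠ t) (hb : (b : V) ≠ t),
      (G.induce (T \ {t})).Reachable ⟨a, ⟨a.2, ha⟩⟩ ⟨b, ⟨b.2, hb⟩⟩ := by
  intro a b w
  induction w with
  | nil => intro ha hb; exact Reachable.refl _
  | @cons p q r h w ih =>
    intro hp hr
    have hq : (q : V) ≠ t := by
      intro e
      have hadj : G.Adj (p : V) (q : V) := h
      rw [e] at hadj
      exact hiso p p.2 hadj.symm
    have hadj' : (G.induce (T \ {t})).Adj ⟨p, ⟨p.2, hp⟩⟩ ⟨q, ⟨q.2, hq⟩⟩ := h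
    exact hadj'.reachable.trans (ih hq hr)

private lemma no_reach_isolated {G : SimpleGraph V} {T : Set V} {t : V} (ht : t ∈ T)
    (hiso : ∀ s ∈ T, ¬ G.Adj t s)
    {b : T} (w : (G.induce T).Walk ⟨t, ht⟩ b) : (b : V) = t := by
  cases w with
  | nil => rfl
  | @cons _ q _ h _ => exact absurd h (hiso _ q.2)

private lemma card_comp_le_of_cover [Fintype V] {G : SimpleGraph V} {S T : Set V} (hST : S ⊆ T)
    (hcov : ∀ t ∈ T, t ∉ S → ∃ s ∈ S, G.Adj t s) :
    Nat.card (G.induce T).ConnectedComponent ≤ Nat.card (G.induce S).ConnectedComponent := by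
  classical
  have hsurj : Function.Surjective
      (ConnectedComponent.map (G.induceHomOfLE hST).toHom) := by
    intro C
    refine C.ind fun b => ?_
    by_cases hb : (b : V) ∈ S
    · exact ⟨(G.induce S).connectedComponentMk ⟨b, hb⟩, rfl⟩
    · obtain ⟨s, hs, hadj⟩ := hcov b b.2 hb
      refine ⟨(G.induce S).connectedComponentMk ⟨s, hs⟩, ?_⟩
      rw [ConnectedComponent.map_mk]
      exact ConnectedComponent.connectedComponentMk_eq_of_adj
        (show (G.induce T).Adj ⟨s, hST hs⟩ b from hadj.symm)
  exact Nat.card_le_card_of_surjective _ hsurj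

private lemma card_comp_isolated [Fintype V] {G : SimpleGraph V} {T : Set V} {t : V} (ht : t ∈ T)
    (hiso : ∀ s ∈ T, ¬ G.Adj t s) :
    Nat.card (G.induce (T \ {t})).ConnectedComponent + 1
      ≤ Nat.card (G.induce T).ConnectedComponent := by
  classical
  have hsub : T \ {t} ⊆ T := Set.diff_subset
  set f := ConnectedComponent.map (G.induceHomOfLE hsub).toHom with hf
  have hmiss : ∀ C, f C ≠ (G.induce T).connectedComponentMk ⟨t, ht⟩ := by
    intro C
    refine C.ind fun a => ?_
    intro hEq
    rw [hf, ConnectedComponent.map_mk] at hEq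
    have hreach := (ConnectedComponent.eq.mp hEq).symm
    obtain ⟨w⟩ := hreach
    have := no_reach_isolated ht hiso w
    exact a.2.2 this
  have finj : Function.Injective f := by
    intro C D
    refine C.ind fun a => D.ind fun b => ?_
    intro hEq
    rw [hf, ConnectedComponent.map_mk, ConnectedComponent.map_mk] at hEq
    obtain ⟨w⟩ := ConnectedComponent.eq.mp hEq
    have hr := reach_down hiso w a.2.2 b.2.2
    exact ConnectedComponent.sound hr
  have hinj2 : Function.Injective
      (Sum.elim f (fun _ : Unit => (G.induce T).connectedComponentMk ⟨t, ht⟩)) := by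
    rintro (C | ⟨⟩) (D | ⟨⟩) hCD
    · rw [Sum.elim_inl, Sum.elim_inl] at hCD; rw [finj hCD]
    · exact absurd hCD (hmiss C)
    · exact absurd hCD.symm (hmiss D)
    · rfl
  have := Nat.card_le_card_of_injective _ hinj2
  simpa [Nat.card_sum] using this

section SwapLemmas
variable [Fintype V] [DecidableEq V]

private lemma indep_insert {G : SimpleGraph V} {I : Finset V} (hI : FinsetIndep G I) {a : V}
    (h : ∀ t ∈ I, ¬ G.Adj a t) : FinsetIndep G (insert a I) := by
  intro p hp q hq
  rcases Finset.mem_insert.mp hp with rfl | hp' <;> rcases Finset.mem_insert.mp hq with rfl | hq'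
  · exact G.loopless.irrefl _
  · exact h q hq'
  · exact fun hadj => h p hp' hadj.symm
  · exact hI p hp' q hq'

private lemma indep_subset {G : SimpleGraph V} {I J : Finset V} (hsub : J ⊆ I)
    (hI : FinsetIndep G I) : FinsetIndep G J :=
  fun p hp q hq => hI p (hsub hp) q (hsub hq)

private lemma red_has_B_nbr {G : SimpleGraph V} {A B : Finset V} (hd : Disjoint A B)
    (hA : FinsetIndep G A) (hB : FinsetIndep G B)
    (hmax : CondI G A B) {r : V} (hr : r ∈ redSet A B) :
    ∃ s ∈ B, G.Adj r s := by
  by_contra hno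
  push_neg at hno
  have hdisj : Disjoint A (insert r B) := by
    rw [Finset.disjoint_insert_right]
    exact ⟨hr.1, hd⟩
  have hindep : FinsetIndep G (insert r B) := indep_insert hB (fun t ht => hno t ht)
  have hle := hmax A (insert r B) hdisj hA hindep
  rw [Finset.card_insert_of_notMem hr.2] at hle
  omega

private lemma redSet_insert_erase {A B : Finset V} {u z : V}
    (huA : u ∉ A) (huB : u ∉ B) (hzA : z ∈ A) (hzB : z ∉ B) (huz : u ≠ z) :
    redSet (insert u (A.erase z)) B = (redSet A B \ {u}) ∪ {z} := by
  ext t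
  simp only [redSet, Set.mem_setOf_eq, Set.mem_union, Set.mem_diff, Set.mem_singleton_iff,
    Finset.mem_insert, Finset.mem_erase, not_or, not_and]
  by_cases h1 : t = u <;> by_cases h2 : t = z <;> subst_eqs <;> tauto

private lemma redSet_comm (A B : Finset V) : redSet A B = redSet B A := by
  ext t; exact and_comm

private lemma redSet_toggle {A B : Finset V} {x : V} (hxA : x ∈ A) :
    redSet (A.erase x) (insert x B) = redSet A B := by
  ext t
  simp only [redSet, Set.mem_setOf_eq, Finset.mem_erase, Finset.mem_insert, not_or, not_and]
  by_cases h : t = x <;> subst_eqs <;> tauto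

private lemma swap_contra {G : SimpleGraph V} {A B J1 J2 : Finset V}
    (hmax : CondI G A B) (hmin : CondII G A B)
    {u z r : V} (hu : u ∈ redSet A B)
    (hiso : ∀ s ∈ redSet A B, ¬ G.Adj u s)
    (hdJ : Disjoint J1 J2) (hJ1 : FinsetIndep G J1) (hJ2 : FinsetIndep G J2)
    (hcard : J1.card + J2.card = A.card + B.card)
    (hredJ : redSet J1 J2 = (redSet A B \ {u}) ∪ {z})
    (hr : r ∈ redSet A B) (hru : r ≠ u) (hzr : G.Adj z r) : False := by
  have hCondIJ : CondI G J1 J2 := fun K1 K2 hk h1 h2 => hcard ▸ hmax K1 K2 hk h1 h2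
  have h1 : numRedComp G A B ≤ numRedComp G J1 J2 := hmin J1 J2 hdJ hJ1 hJ2 hCondIJ
  have h2 : numRedComp G J1 J2
      = Nat.card (G.induce ((redSet A B \ {u}) ∪ {z})).ConnectedComponent := by
    unfold numRedComp; rw [hredJ]
  have h3 : Nat.card (G.induce ((redSet A B \ {u}) ∪ {z})).ConnectedComponent
      ≤ Nat.card (G.induce (redSet A B \ {u})).ConnectedComponent := by
    refine card_comp_le_of_cover Set.subset_union_left ?_
    intro a haT haS
    rcases haT with h | h
    · exact absurd h haS
    · refine ⟨r, ⟨hr, hru⟩, ?_⟩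
      rw [Set.mem_singleton_iff] at h
      rw [h]; exact hzr
  have h4 : Nat.card (G.induce (redSet A B \ {u})).ConnectedComponent + 1
      ≤ Nat.card (G.induce (redSet A B)).ConnectedComponent := card_comp_isolated hu hiso
  have h5 : numRedComp G A B = Nat.card (G.induce (redSet A B)).ConnectedComponent := rfl
  omega


private lemma third_nbr {G : SimpleGraph V} [DecidableRel G.Adj] {u : V}
    (hdeg : G.degree u = 3) {p q : V} (hp : G.Adj u p) (hq : G.Adj u q) (hpq : p ≠ q) :
    ∃ b, G.neighborFinset u = {p, q, b} ∧ b ≠ p ∧ b ≠ q := by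
  classical
  have hsub : ({p, q} : Finset V) ⊆ G.neighborFinset u := by
    intro t ht
    rcases Finset.mem_insert.mp ht with rfl | ht
    · exact (G.mem_neighborFinset u t).mpr hp
    · rw [Finset.mem_singleton] at ht; subst ht
      exact (G.mem_neighborFinset u t).mpr hq
  have hc2 : ({p, q} : Finset V).card = 2 := by
    rw [Finset.card_insert_of_notMem (by simpa using hpq), Finset.card_singleton]
  have hcard : (G.neighborFinset u \ {p, q}).card = 1 := by
    rw [Finset.card_sdiff_of_subset hsub, hc2]
    have : (G.neighborFinset u).card = 3 := hdeg
    omega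
  obtain ⟨b, hb⟩ := Finset.card_eq_one.mp hcard
  have hbmem : b ∈ G.neighborFinset u \ ({p, q} : Finset V) := by
    rw [hb]; exact Finset.mem_singleton_self b
  rw [Finset.mem_sdiff] at hbmem
  have hbp : b ≠ p := fun e => hbmem.2 (by rw [e]; exact Finset.mem_insert_self _ _)
  have hbq : b ≠ q := fun e => hbmem.2 (by rw [e]; simp)
  refine ⟨b, ?_, hbp, hbq⟩
  apply Finset.Subset.antisymm
  · intro t ht
    by_cases htpq : t ∈ ({p, q} : Finset V)
    · simp only [Finset.mem_insert, Finset.mem_singleton] at htpq ⊢; tauto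
    · have : t ∈ G.neighborFinset u \ ({p, q} : Finset V) := Finset.mem_sdiff.mpr ⟨ht, htpq⟩
      rw [hb, Finset.mem_singleton] at this
      simp [this]
  · intro t ht
    simp only [Finset.mem_insert, Finset.mem_singleton] at ht
    rcases ht with rfl | rfl | rfl
    · exact (G.mem_neighborFinset u t).mpr hp
    · exact (G.mem_neighborFinset u t).mpr hq
    · exact hbmem.1

/-- Engine E1: if `x ∈ A` has all three neighbours `u,v,w` red and the red `u`
has a red neighbour, we can improve the sum: contradiction with CondI. -/
private lemma E1 {G : SimpleGraph V} [DecidableRel G.Adj]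
    (hcubic : ∀ v : V, G.degree v = 3) {A B : Finset V} (hd : Disjoint A B)
    (hA : FinsetIndep G A) (hB : FinsetIndep G B) (hmax : CondI G A B)
    {x u v w : V} (hxA : x ∈ A) (hxnb : G.neighborFinset x = {u, v, w})
    (hured : u ∈ redSet A B) (hvred : v ∈ redSet A B) (hwred : w ∈ redSet A B)
    {s : V} (hs : s ∈ redSet A B) (hadj : G.Adj u s) : False := by
  classical
  have hxB : x ∉ B := Finset.disjoint_left.mp hd hxA
  have hxu : G.Adj x u := by
    rw [← G.mem_neighborFinset, hxnb]; exact Finset.mem_insert_self _ _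
  have hxs : x ≠ s := fun e => hs.1 (e ▸ hxA)
  obtain ⟨z, hznb, hzx, hzs⟩ := third_nbr (hcubic u) hxu.symm hadj hxs
  have hzB : z ∈ B := by
    obtain ⟨t, htB, htadj⟩ := red_has_B_nbr hd hA hB hmax hured
    have : t ∈ G.neighborFinset u := (G.mem_neighborFinset u t).mpr htadj
    rw [hznb] at this
    simp only [Finset.mem_insert, Finset.mem_singleton] at this
    rcases this with rfl | rfl | rfl
    · exact absurd htB hxB
    · exact absurd htB hs.2
    · exact htB
  -- the improved pair
  have hu_nbrs : ∀ t, G.Adj u t → t = x ∨ t = s ∨ t = z := by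
    intro t ht
    have : t ∈ G.neighborFinset u := (G.mem_neighborFinset u t).mpr ht
    rw [hznb] at this
    simpa using this
  have hJ1 : FinsetIndep G (insert u (A.erase x)) := by
    refine indep_insert (indep_subset (Finset.erase_subset _ _) hA) ?_
    intro t ht hadj'
    rcases hu_nbrs t hadj' with rfl | rfl | rfl
    · exact (Finset.notMem_erase t A) ht
    · exact hs.1 (Finset.mem_of_mem_erase ht)
    · exact (Finset.disjoint_left.mp hd (Finset.mem_of_mem_erase ht)) hzB
  have hJ2 : FinsetIndep G (insert x B) := by
    refine indep_insert hB ?_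
    intro t ht hadj'
    have : t ∈ G.neighborFinset x := (G.mem_neighborFinset x t).mpr hadj'
    rw [hxnb] at this
    simp only [Finset.mem_insert, Finset.mem_singleton] at this
    rcases this with rfl | rfl | rfl
    · exact hured.2 ht
    · exact hvred.2 ht
    · exact hwred.2 ht
  have hdJ : Disjoint (insert u (A.erase x)) (insert x B) := by
    rw [Finset.disjoint_insert_left, Finset.disjoint_insert_right]
    refine ⟨?_, Finset.notMem_erase x A, Finset.disjoint_of_subset_left (Finset.erase_subset _ _) hd⟩
    simp only [Finset.mem_insert]
    push_neg
    exact ⟨hxu.ne', hured.2⟩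
  have hle := hmax _ _ hdJ hJ1 hJ2
  have hc1 : (insert u (A.erase x)).card = A.card := by
    rw [Finset.card_insert_of_notMem (fun h => hured.1 (Finset.mem_of_mem_erase h)),
      Finset.card_erase_of_mem hxA]
    have : 1 ≤ A.card := Finset.card_pos.mpr ⟨x, hxA⟩
    omega
  have hc2 : (insert x B).card = B.card + 1 := Finset.card_insert_of_notMem hxB
  rw [hc1, hc2] at hle
  omega

private lemma no_near_red {G : SimpleGraph V} [DecidableRel G.Adj]
    (hcubic : ∀ v : V, G.degree v = 3) {A B : Finset V} (hd : Disjoint A B)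
    (hA : FinsetIndep G A) (hB : FinsetIndep G B) (hmax : CondI G A B) (hmin : CondII G A B)
    {x u v w y : V} (hxA : x ∈ A) (hxnb : G.neighborFinset x = {u, v, w})
    (hured : u ∈ redSet A B) (hvred : v ∈ redSet A B) (hwred : w ∈ redSet A B)
    (huv : u ≠ v)
    (hyred : y ∈ redSet A B) (hyu : y ≠ u) (hyv : y ≠ v) (hyw : y ≠ w)
    (hdist : G.edist y u ≤ 2) : False := by
  classical
  have hxB : x ∉ B := Finset.disjoint_left.mp hd hxA
  have hxu : G.Adj x u := by
    rw [← G.mem_neighborFinset, hxnb]; exact Finset.mem_insert_self _ _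
  have hxv : G.Adj x v := by
    rw [← G.mem_neighborFinset, hxnb]; simp
  have hiso : ∀ s ∈ redSet A B, ¬ G.Adj u s := fun s hs hadj =>
    E1 hcubic hd hA hB hmax hxA hxnb hured hvred hwred hs hadj
  have hne : G.edist y u ≠ ⊤ := fun h => by rw [h] at hdist; exact (by simp : ¬ ((⊤:ℕ∞) ≤ 2)) hdist
  obtain ⟨p, hp⟩ := exists_walk_of_edist_ne_top hne
  have hplen : p.length ≤ 2 := by
    have h2 : (p.length : ℕ∞) ≤ 2 := by rw [hp]; exact hdist
    exact_mod_cast h2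
  cases p with
  | nil => exact hyu rfl
  | @cons _ m1 _ h1 q =>
    cases q with
    | nil => exact hiso y hyred h1.symm
    | @cons _ m2 _ h2 r =>
      cases r with
      | cons h3 r' =>
        rw [Walk.length_cons, Walk.length_cons, Walk.length_cons] at hplen; omega
      | nil =>
        -- h1 : G.Adj y m1, h2 : G.Adj m1 u
        have hmx : m1 ≠ x := by
          intro e
          have hmem : y ∈ G.neighborFinset x := (G.mem_neighborFinset _ _).mpr (e ▸ h1.symm)
          rw [hxnb] at hmem
          simp only [Finset.mem_insert, Finset.mem_singleton] at hmem
          tauto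
        have hmblack : m1 ∉ redSet A B := fun hm => hiso m1 hm h2.symm
        obtain ⟨b, hbnb, hbx, hbm⟩ := third_nbr (hcubic u) hxu.symm h2.symm (Ne.symm hmx)
        have hu_nbrs : ∀ t, G.Adj u t → t = x ∨ t = m1 ∨ t = b := by
          intro t ht
          have hmem : t ∈ G.neighborFinset u := (G.mem_neighborFinset u t).mpr ht
          rw [hbnb] at hmem
          simpa using hmem
        have hbadj : G.Adj u b := by
          rw [← G.mem_neighborFinset, hbnb]; simp
        have hbblack : b ∉ redSet A B := fun hb => hiso b hb hbadj
        have hum : u ≠ m1 := Ne.symm h2.ne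
        have hm_cases : m1 ∈ A ∨ m1 ∈ B := by
          by_contra hc; push_neg at hc; exact hmblack ⟨hc.1, hc.2⟩
        have hb_cases : b ∈ A ∨ b ∈ B := by
          by_contra hc; push_neg at hc; exact hbblack ⟨hc.1, hc.2⟩
        rcases hm_cases with hmA | hmB
        · -- m1 ∈ A: toggle x to the B side, then swap m1 ↔ u, witness y
          have hbB : b ∈ B := by
            obtain ⟨t, htB, htadj⟩ := red_has_B_nbr hd hA hB hmax hured
            rcases hu_nbrs t htadj with rfl | rfl | rfl
            · exact absurd htB hxB
            · exact absurd htB (Finset.disjoint_left.mp hd hmA)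
            · exact htB
          set A' := A.erase x with hA'
          set B' := insert x B with hB'
          have htog : redSet A' B' = redSet A B := redSet_toggle hxA
          have hd' : Disjoint A' B' := by
            rw [Finset.disjoint_insert_right]
            exact ⟨Finset.notMem_erase x A,
              Finset.disjoint_of_subset_left (Finset.erase_subset _ _) hd⟩
          have hA'i : FinsetIndep G A' := indep_subset (Finset.erase_subset _ _) hA
          have hB'i : FinsetIndep G B' := by
            refine indep_insert hB ?_
            intro t ht hadj'
            have hmem : t ∈ G.neighborFinset x := (G.mem_neighborFinset _ _).mpr hadj'
            rw [hxnb] at hmem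
            simp only [Finset.mem_insert, Finset.mem_singleton] at hmem
            rcases hmem with rfl | rfl | rfl
            · exact hured.2 ht
            · exact hvred.2 ht
            · exact hwred.2 ht
          have hcards : A'.card + B'.card = A.card + B.card := by
            rw [hA', hB', Finset.card_erase_of_mem hxA, Finset.card_insert_of_notMem hxB]
            have hA1 : 1 ≤ A.card := Finset.card_pos.mpr ⟨x, hxA⟩
            omega
          have hmax' : CondI G A' B' := by
            intro K1 K2 hk k1 k2
            have := hmax K1 K2 hk k1 k2
            omega
          have hmin' : CondII G A' B' := by
            intro K1 K2 hk k1 k2 kI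
            have heq : numRedComp G A' B' = numRedComp G A B := by
              unfold numRedComp; rw [htog]
            rw [heq]; exact hmin K1 K2 hk k1 k2 kI
          have humA' : u ∉ A' := fun h => hured.1 (Finset.mem_of_mem_erase h)
          have humB' : u ∉ B' := by
            rw [hB', Finset.mem_insert]
            push_neg
            exact ⟨hxu.ne', hured.2⟩
          have hmA' : m1 ∈ A' := Finset.mem_erase.mpr ⟨hmx, hmA⟩
          have hmB' : m1 ∉ B' := by
            rw [hB', Finset.mem_insert]
            push_neg
            exact ⟨hmx, Finset.disjoint_left.mp hd hmA⟩
          have hJ1 : FinsetIndep G (insert u (A'.erase m1)) := by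
            refine indep_insert (indep_subset (Finset.erase_subset _ _) hA'i) ?_
            intro t ht hadj'
            rcases hu_nbrs t hadj' with rfl | rfl | rfl
            · exact (Finset.notMem_erase _ A) (Finset.mem_of_mem_erase ht)
            · exact (Finset.notMem_erase _ A') ht
            · exact (Finset.disjoint_left.mp hd
                (Finset.mem_of_mem_erase (Finset.mem_of_mem_erase ht))) hbB
          have hdJ : Disjoint (insert u (A'.erase m1)) B' := by
            rw [Finset.disjoint_insert_left]
            exact ⟨humB', Finset.disjoint_of_subset_left (Finset.erase_subset _ _) hd'⟩
          have hcardJ : (insert u (A'.erase m1)).card + B'.card = A'.card + B'.card := by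
            rw [Finset.card_insert_of_notMem (fun h => humA' (Finset.mem_of_mem_erase h)),
              Finset.card_erase_of_mem hmA']
            have hA1 : 1 ≤ A'.card := Finset.card_pos.mpr ⟨m1, hmA'⟩
            omega
          have hredJ : redSet (insert u (A'.erase m1)) B' = (redSet A' B' \ {u}) ∪ {m1} :=
            redSet_insert_erase humA' humB' hmA' hmB' hum
          exact swap_contra hmax' hmin' (htog.symm ▸ hured) (fun s hs => hiso s (htog ▸ hs))
            hdJ hJ1 hB'i hcardJ hredJ (htog.symm ▸ hyred) hyu h1.symm
        · rcases hb_cases with hbA | hbB2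
          · -- m1 ∈ B, b ∈ A: swap m1 ↔ u inside B, witness y
            have hmA2 : m1 ∉ A := Finset.disjoint_right.mp hd hmB
            have hJ2 : FinsetIndep G (insert u (B.erase m1)) := by
              refine indep_insert (indep_subset (Finset.erase_subset _ _) hB) ?_
              intro t ht hadj'
              rcases hu_nbrs t hadj' with rfl | rfl | rfl
              · exact hxB (Finset.mem_of_mem_erase ht)
              · exact (Finset.notMem_erase _ B) ht
              · exact (Finset.disjoint_left.mp hd hbA) (Finset.mem_of_mem_erase ht)
            have hdJ : Disjoint A (insert u (B.erase m1)) := by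
              rw [Finset.disjoint_insert_right]
              exact ⟨hured.1, Finset.disjoint_of_subset_right (Finset.erase_subset _ _) hd⟩
            have hcardJ : A.card + (insert u (B.erase m1)).card = A.card + B.card := by
              rw [Finset.card_insert_of_notMem (fun h => hured.2 (Finset.mem_of_mem_erase h)),
                Finset.card_erase_of_mem hmB]
              have hB1 : 1 ≤ B.card := Finset.card_pos.mpr ⟨m1, hmB⟩
              omega
            have hredJ : redSet A (insert u (B.erase m1)) = (redSet A B \ {u}) ∪ {m1} := by
              rw [redSet_comm A (insert u (B.erase m1)),
                redSet_insert_erase hured.2 hured.1 hmB hmA2 hum, redSet_comm B A]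
            exact swap_contra hmax hmin hured hiso hdJ hA hJ2 hcardJ hredJ hyred hyu h1.symm
          · -- m1 ∈ B, b ∈ B: swap x ↔ u inside A, witness v
            have hJ1 : FinsetIndep G (insert u (A.erase x)) := by
              refine indep_insert (indep_subset (Finset.erase_subset _ _) hA) ?_
              intro t ht hadj'
              rcases hu_nbrs t hadj' with rfl | rfl | rfl
              · exact (Finset.notMem_erase _ A) ht
              · exact (Finset.disjoint_left.mp hd (Finset.mem_of_mem_erase ht)) hmB
              · exact (Finset.disjoint_left.mp hd (Finset.mem_of_mem_erase ht)) hbB2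
            have hdJ : Disjoint (insert u (A.erase x)) B := by
              rw [Finset.disjoint_insert_left]
              exact ⟨hured.2, Finset.disjoint_of_subset_left (Finset.erase_subset _ _) hd⟩
            have hcardJ : (insert u (A.erase x)).card + B.card = A.card + B.card := by
              rw [Finset.card_insert_of_notMem (fun h => hured.1 (Finset.mem_of_mem_erase h)),
                Finset.card_erase_of_mem hxA]
              have hA1 : 1 ≤ A.card := Finset.card_pos.mpr ⟨x, hxA⟩
              omega
            have hredJ : redSet (insert u (A.erase x)) B = (redSet A B \ {u}) ∪ {x} :=
              redSet_insert_erase hured.1 hured.2 hxA hxB hxu.ne'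
            exact swap_contra hmax hmin hured hiso hdJ hJ1 hB hcardJ hredJ hvred
              (Ne.symm huv) hxv


end SwapLemmas
end AuxiliaryLemmas

/-- Under Conditions (I) and (II), if three red vertices `u, v, w` are adjacent
to a common black vertex `x`, then every vertex `y ∉ {u,v,w}` within distance 2
of `{u,v,w}` is black; moreover `{u,v,w}` is the vertex set of a connected
component of `H` in which `u, v, w` are pairwise adjacent. -/

theorem triangle_component_of_common_black_neighbor
    {V : Type*} [Fintype V] [DecidableEq V] (G : SimpleGraph V) [DecidableRel G.Adj]
    (hconn : G.Connected) (hcubic : ∀ v : V, G.degree v = 3)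
    (I1 I2 : Finset V) (hdisj : Disjoint I1 I2)
    (hI1 : FinsetIndep G I1) (hI2 : FinsetIndep G I2)
    (hmax : CondI G I1 I2) (hmin : CondII G I1 I2)
    (u v w x : V)
    (hu : u ∈ redSet I1 I2) (hv : v ∈ redSet I1 I2) (hw : w ∈ redSet I1 I2)
    (huvw : u ≠ v ∧ u ≠ w ∧ v ≠ w)
    (hx : x ∈ I1 ∪ I2)
    (hxu : G.Adj x u) (hxv : G.Adj x v) (hxw : G.Adj x w) :
    (∀ y : V, y ≠ u → y ≠ v → y ≠ w →
        min (G.edist y u) (min (G.edist y v) (G.edist y w)) ≤ 2 →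
        y ∈ I1 ∪ I2) ∧
    (Hgraph G I1 I2).Adj ⟨u, hu⟩ ⟨v, hv⟩ ∧
    (Hgraph G I1 I2).Adj ⟨u, hu⟩ ⟨w, hw⟩ ∧
    (Hgraph G I1 I2).Adj ⟨v, hv⟩ ⟨w, hw⟩ ∧
    ((Hgraph G I1 I2).connectedComponentMk ⟨u, hu⟩).supp =
      {(⟨u, hu⟩ : redSet I1 I2), ⟨v, hv⟩, ⟨w, hw⟩} := by
  classical
  obtain ⟨huv, huw, hvw⟩ := huvw
  -- neighbours of x are exactly u, v, w
  have hxnb : G.neighborFinset x = {u, v, w} := by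
    have hsub : ({u, v, w} : Finset V) ⊆ G.neighborFinset x := by
      intro t ht
      simp only [Finset.mem_insert, Finset.mem_singleton] at ht
      rcases ht with rfl | rfl | rfl
      · exact (G.mem_neighborFinset _ _).mpr hxu
      · exact (G.mem_neighborFinset _ _).mpr hxv
      · exact (G.mem_neighborFinset _ _).mpr hxw
    have hc3 : ({u, v, w} : Finset V).card = 3 := by
      rw [Finset.card_insert_of_notMem (by simp [huv, huw]),
        Finset.card_insert_of_notMem (by simp [hvw]), Finset.card_singleton]
    refine (Finset.eq_of_subset_of_card_le hsub ?_).symm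
    rw [hc3]
    exact le_of_eq (hcubic x)
  have hxnb_v : G.neighborFinset x = {v, u, w} := by
    rw [hxnb]; ext t
    simp only [Finset.mem_insert, Finset.mem_singleton]; tauto
  have hxnb_w : G.neighborFinset x = {w, u, v} := by
    rw [hxnb]; ext t
    simp only [Finset.mem_insert, Finset.mem_singleton]; tauto
  -- Part 1
  have key : ∀ y : V, y ≠ u → y ≠ v → y ≠ w →
      min (G.edist y u) (min (G.edist y v) (G.edist y w)) ≤ 2 → y ∈ I1 ∪ I2 := by
    intro y hyu hyv hyw hmind
    by_contra hblack
    have hyred : y ∈ redSet I1 I2 :=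
      ⟨fun h => hblack (Finset.mem_union_left _ h), fun h => hblack (Finset.mem_union_right _ h)⟩
    have hsplit : G.edist y u ≤ 2 ∨ G.edist y v ≤ 2 ∨ G.edist y w ≤ 2 := by
      rcases min_le_iff.mp hmind with h | h
      · exact Or.inl h
      · rcases min_le_iff.mp h with h' | h'
        · exact Or.inr (Or.inl h')
        · exact Or.inr (Or.inr h')
    rcases Finset.mem_union.mp hx with hxA | hxB
    · rcases hsplit with h | h | h
      · exact no_near_red hcubic hdisj hI1 hI2 hmax hmin hxA hxnb hu hv hw huv
          hyred hyu hyv hyw h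
      · exact no_near_red hcubic hdisj hI1 hI2 hmax hmin hxA hxnb_v hv hu hw (Ne.symm huv)
          hyred hyv hyu hyw h
      · exact no_near_red hcubic hdisj hI1 hI2 hmax hmin hxA hxnb_w hw hu hv (Ne.symm huw)
          hyred hyw hyu hyv h
    · -- x ∈ I2 : swap the roles of I1 and I2
      have hd2 : Disjoint I2 I1 := hdisj.symm
      have hmax2 : CondI G I2 I1 := by
        intro K1 K2 hk k1 k2
        have := hmax K1 K2 hk k1 k2
        omega
      have hmin2 : CondII G I2 I1 := by
        intro K1 K2 hk k1 k2 kI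
        have heq : numRedComp G I2 I1 = numRedComp G I1 I2 := by
          unfold numRedComp; rw [redSet_comm I2 I1]
        rw [heq]
        refine hmin K1 K2 hk k1 k2 ?_
        intro L1 L2 hl l1 l2
        have := kI L1 L2 hl l1 l2
        omega
      have hu2 : u ∈ redSet I2 I1 := ⟨hu.2, hu.1⟩
      have hv2 : v ∈ redSet I2 I1 := ⟨hv.2, hv.1⟩
      have hw2 : w ∈ redSet I2 I1 := ⟨hw.2, hw.1⟩
      have hy2 : y ∈ redSet I2 I1 := ⟨hyred.2, hyred.1⟩
      rcases hsplit with h | h | h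
      · exact no_near_red hcubic hd2 hI2 hI1 hmax2 hmin2 hxB hxnb hu2 hv2 hw2 huv
          hy2 hyu hyv hyw h
      · exact no_near_red hcubic hd2 hI2 hI1 hmax2 hmin2 hxB hxnb_v hv2 hu2 hw2 (Ne.symm huv)
          hy2 hyv hyu hyw h
      · exact no_near_red hcubic hd2 hI2 hI1 hmax2 hmin2 hxB hxnb_w hw2 hu2 hv2 (Ne.symm huw)
          hy2 hyw hyu hyv h
  -- Part 2 : H-adjacencies
  have hedist : ∀ {a b : V}, G.Adj x a → G.Adj x b → G.edist a b ≤ 2 := by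
    intro a b ha hb
    calc G.edist a b ≤ G.edist a x + G.edist x b := SimpleGraph.edist_triangle
      _ ≤ 1 + 1 := add_le_add (le_of_eq (edist_eq_one_iff_adj.mpr ha.symm))
          (le_of_eq (edist_eq_one_iff_adj.mpr hb))
      _ = 2 := by norm_num
  have hadj_uv : (Hgraph G I1 I2).Adj ⟨u, hu⟩ ⟨v, hv⟩ :=
    ⟨fun h => huv (congrArg Subtype.val h), hedist hxu hxv⟩
  have hadj_uw : (Hgraph G I1 I2).Adj ⟨u, hu⟩ ⟨w, hw⟩ :=
    ⟨fun h => huw (congrArg Subtype.val h), hedist hxu hxw⟩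
  have hadj_vw : (Hgraph G I1 I2).Adj ⟨v, hv⟩ ⟨w, hw⟩ :=
    ⟨fun h => hvw (congrArg Subtype.val h), hedist hxv hxw⟩
  refine ⟨key, hadj_uv, hadj_uw, hadj_vw, ?_⟩
  -- Part 3 : the component
  have closure : ∀ z t : redSet I1 I2, (Hgraph G I1 I2).Adj z t →
      t ∈ ({⟨u, hu⟩, ⟨v, hv⟩, ⟨w, hw⟩} : Set (redSet I1 I2)) →
      z ∈ ({⟨u, hu⟩, ⟨v, hv⟩, ⟨w, hw⟩} : Set (redSet I1 I2)) := by
    intro z t hadj ht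
    obtain ⟨hne, hle⟩ := hadj
    by_cases h1 : (z : V) = u
    · exact Or.inl (Subtype.ext h1)
    by_cases h2 : (z : V) = v
    · exact Or.inr (Or.inl (Subtype.ext h2))
    by_cases h3 : (z : V) = w
    · exact Or.inr (Or.inr (Subtype.ext h3))
    exfalso
    have hbound : min (G.edist (z : V) u) (min (G.edist (z : V) v) (G.edist (z : V) w)) ≤ 2 := by
      rcases ht with rfl | rfl | rfl
      · exact le_trans (min_le_left _ _) hle
      · exact le_trans (min_le_right _ _) (le_trans (min_le_left _ _) hle)
      · exact le_trans (min_le_right _ _) (le_trans (min_le_right _ _) hle)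
    have := key (z : V) h1 h2 h3 hbound
    rcases Finset.mem_union.mp this with h | h
    · exact z.2.1 h
    · exact z.2.2 h
  have walkS : ∀ (z t : redSet I1 I2) (_ : (Hgraph G I1 I2).Walk z t),
      t ∈ ({⟨u, hu⟩, ⟨v, hv⟩, ⟨w, hw⟩} : Set (redSet I1 I2)) →
      z ∈ ({⟨u, hu⟩, ⟨v, hv⟩, ⟨w, hw⟩} : Set (redSet I1 I2)) := by
    intro z t p
    induction p with
    | nil => exact fun h => h
    | cons h q ih => exact fun hmem => closure _ _ h (ih hmem)
  ext z
  simp only [ConnectedComponent.mem_supp_iff]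
  constructor
  · intro h
    obtain ⟨p⟩ := ConnectedComponent.exact h
    exact walkS z _ p (Or.inl rfl)
  · intro hz
    rcases hz with rfl | hz
    · rfl
    rcases hz with rfl | hz
    · exact ConnectedComponent.sound hadj_uv.symm.reachable
    · rw [Set.mem_singleton_iff] at hz
      subst hz
      exact ConnectedComponent.sound hadj_uw.symm.reachable
end

section
/- Let G be a finite connected cubic graph and let (I1,I2) be a pair of disjoint independent sets satisfying Conditions (I) and (II). Suppose the cycle setup holds for C' and all the black vertices vi of C' lie in I1. Let x be a vertex of G not on C' and let d(x,C') denote the minimum distance in G from x to a vertex of C'. If d(x,C') ≤ 2 then x ∈ I1 ∪ I2; more precisely, if d(x,C') = 1 then x ∈ I2, and if d(x,C') = 2 then x ∈ I1. -/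
open SimpleGraph

variable {V : Type*}

/-- The number of black vertices on the cycle `C'`: `k` in the no-red-`P2`
case and `k - 1` in the red-`P2` case. -/
def blackCount (k : ℕ) (p2 : Bool) : ℕ := if p2 then k - 1 else k

/-- The cycle setup: `u 0, …, u (k-1)` are red vertices forming the vertex set
of a connected component of `H`, and `C'` is a cycle of `G` which is either
`u 0, v 0, u 1, v 1, …, u (k-1), v (k-1), u 0` (no-red-`P2` case, `p2 = false`,
`2k` distinct vertices), or
`u 0, v 0, u 1, v 1, …, v (k-2), u (k-1), u 0` (red-`P2` case, `p2 = true`,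
`2k - 1` distinct vertices, with `u (k-1)` adjacent to `u 0`). -/
def CycleSetup (G : SimpleGraph V) (I1 I2 : Finset V) (k : ℕ)
    (u v : ℕ → V) (p2 : Bool) : Prop :=
  3 ≤ k ∧
  (∀ i < k, u i ∈ redSet I1 I2) ∧
  (∀ i < blackCount k p2, v i ∈ I1 ∨ v i ∈ I2) ∧
  (∀ i < k, ∀ j < k, u i = u j → i = j) ∧
  (∀ i < blackCount k p2, ∀ j < blackCount k p2, v i = v j → i = j) ∧
  (∀ i < k, ∀ j < blackCount k p2, u i ≠ v j) ∧
  (∀ i < blackCount k p2, G.Adj (u i) (v i)) ∧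
  (∀ i < blackCount k p2, G.Adj (v i) (u ((i + 1) % k))) ∧
  (p2 = true → G.Adj (u (k - 1)) (u 0)) ∧
  (∃ c : (Hgraph G I1 I2).ConnectedComponent,
      c.supp = {x : redSet I1 I2 | ∃ i < k, (x : V) = u i})

/-- The vertex set of the cycle `C'`. -/
def cycleVerts (k : ℕ) (u v : ℕ → V) (p2 : Bool) : Set V :=
  {x | (∃ i < k, x = u i) ∨ (∃ i < blackCount k p2, x = v i)}

section Aux

variable {V : Type*} [Fintype V] [DecidableEq V] {G : SimpleGraph V} [DecidableRel G.Adj]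

lemma third_nbr_s12 {w a b : V}
    (h3 : G.degree w = 3) (ha : G.Adj w a) (hb : G.Adj w b) (hab : a ≠ b) :
    ∃ t, G.Adj w t ∧ t ≠ a ∧ t ≠ b ∧ ∀ z, G.Adj w z → z = a ∨ z = b ∨ z = t := by
  classical
  have haf : a ∈ G.neighborFinset w := by simpa using ha
  have hbf : b ∈ G.neighborFinset w := by simpa using hb
  have hcard : (G.neighborFinset w).card = 3 := by
    rw [G.card_neighborFinset_eq_degree]; exact h3
  have hsub : ({a, b} : Finset V) ⊆ G.neighborFinset w := by
    intro z hz
    rcases Finset.mem_insert.mp hz with rfl | hz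
    · exact haf
    · rw [Finset.mem_singleton] at hz; subst hz; exact hbf
  have h2 : ({a, b} : Finset V).card = 2 := by
    rw [Finset.card_insert_of_notMem (by simpa using hab), Finset.card_singleton]
  have h1 : ((G.neighborFinset w) \ {a, b}).card = 1 := by
    rw [Finset.card_sdiff_of_subset hsub, hcard, h2]
  obtain ⟨t, ht⟩ := Finset.card_eq_one.mp h1
  have htmem : t ∈ (G.neighborFinset w) \ ({a, b} : Finset V) := by
    rw [ht]; exact Finset.mem_singleton_self t
  rw [Finset.mem_sdiff, SimpleGraph.mem_neighborFinset, Finset.mem_insert,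
    Finset.mem_singleton] at htmem
  push_neg at htmem
  refine ⟨t, htmem.1, htmem.2.1, htmem.2.2, fun z hz => ?_⟩
  by_cases hza : z = a
  · exact Or.inl hza
  by_cases hzb : z = b
  · exact Or.inr (Or.inl hzb)
  have : z ∈ (G.neighborFinset w) \ ({a, b} : Finset V) := by
    rw [Finset.mem_sdiff, SimpleGraph.mem_neighborFinset, Finset.mem_insert,
      Finset.mem_singleton]
    exact ⟨hz, by tauto⟩
  rw [ht, Finset.mem_singleton] at this
  exact Or.inr (Or.inr this)

lemma red_has_nbr_in {I1 I2 : Finset V} (hmax : CondI G I1 I2)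
    (hdisj : Disjoint I1 I2) (hI1 : FinsetIndep G I1) (hI2 : FinsetIndep G I2)
    {r : V} (h1 : r ∉ I1) (h2 : r ∉ I2) :
    (∃ z ∈ I1, G.Adj r z) ∧ (∃ z ∈ I2, G.Adj r z) := by
  constructor
  · by_contra hno
    push_neg at hno
    have hind : FinsetIndep G (insert r I1) := by
      intro a ha b hb hab
      rcases Finset.mem_insert.mp ha with ha' | ha'
      · rcases Finset.mem_insert.mp hb with hb' | hb'
        · rw [ha', hb'] at hab; exact G.loopless.irrefl _ hab
        · rw [ha'] at hab; exact hno b hb' hab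
      · rcases Finset.mem_insert.mp hb with hb' | hb'
        · rw [hb'] at hab; exact hno a ha' hab.symm
        · exact hI1 a ha' b hb' hab
    have hd : Disjoint (insert r I1) I2 := by
      rw [Finset.disjoint_insert_left]; exact ⟨h2, hdisj⟩
    have := hmax (insert r I1) I2 hd hind hI2
    rw [Finset.card_insert_of_notMem h1] at this
    omega
  · by_contra hno
    push_neg at hno
    have hind : FinsetIndep G (insert r I2) := by
      intro a ha b hb hab
      rcases Finset.mem_insert.mp ha with ha' | ha'
      · rcases Finset.mem_insert.mp hb with hb' | hb'
        · rw [ha', hb'] at hab; exact G.loopless.irrefl _ hab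
        · rw [ha'] at hab; exact hno b hb' hab
      · rcases Finset.mem_insert.mp hb with hb' | hb'
        · rw [hb'] at hab; exact hno a ha' hab.symm
        · exact hI2 a ha' b hb' hab
    have hd : Disjoint I1 (insert r I2) := by
      rw [Finset.disjoint_insert_right]; exact ⟨h1, hdisj⟩
    have := hmax I1 (insert r I2) hd hI1 hind
    rw [Finset.card_insert_of_notMem h2] at this
    omega

end Aux
/-- Packaged hypotheses. -/
structure CSetup {V : Type*} [Fintype V] [DecidableEq V] (G : SimpleGraph V)
    [DecidableRel G.Adj] (I1 I2 : Finset V) (k : ℕ) (u v : ℕ → V) (p2 : Bool) :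
    Prop where
  hcubic : ∀ w : V, G.degree w = 3
  hdisj : Disjoint I1 I2
  hI1 : FinsetIndep G I1
  hI2 : FinsetIndep G I2
  hmax : CondI G I1 I2
  hmin : CondII G I1 I2
  hk : 3 ≤ k
  hured : ∀ i < k, u i ∈ redSet I1 I2
  huinj : ∀ i < k, ∀ j < k, u i = u j → i = j
  hvinj : ∀ i < blackCount k p2, ∀ j < blackCount k p2, v i = v j → i = j
  huv : ∀ i < k, ∀ j < blackCount k p2, u i ≠ v j
  hadj1 : ∀ i < blackCount k p2, G.Adj (u i) (v i)
  hadj2 : ∀ i < blackCount k p2, G.Adj (v i) (u ((i + 1) % k))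
  hp2adj : p2 = true → G.Adj (u (k - 1)) (u 0)
  hcomp : ∃ c : (Hgraph G I1 I2).ConnectedComponent,
      c.supp = {x : redSet I1 I2 | ∃ i < k, (x : V) = u i}
  hblack : ∀ i < blackCount k p2, v i ∈ I1

section Cycle

set_option linter.unusedSectionVars false

variable {V : Type*} [Fintype V] [DecidableEq V] {G : SimpleGraph V} [DecidableRel G.Adj]
variable {I1 I2 : Finset V} {k : ℕ} {u v : ℕ → V} {p2 : Bool}

namespace CSetup

variable (S : CSetup G I1 I2 k u v p2)
include S

lemma bc_le : blackCount k p2 ≤ k := by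
  cases p2 <;> simp [blackCount]

lemma two_le_bc : 2 ≤ blackCount k p2 := by
  have := S.hk; cases p2 <;> simp [blackCount] <;> omega

lemma uI1 (i : ℕ) (hi : i < k) : u i ∉ I1 := (S.hured i hi).1
lemma uI2 (i : ℕ) (hi : i < k) : u i ∉ I2 := (S.hured i hi).2
lemma vI2 (i : ℕ) (hi : i < blackCount k p2) : v i ∉ I2 :=
  Finset.disjoint_left.mp S.hdisj (S.hblack i hi)

/-- If a red vertex is within edist 2 of some `u j`, it is some `u l`. -/
lemma red_close (b : V) (hb : b ∈ redSet I1 I2) (j : ℕ) (hj : j < k)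
    (hd : G.edist b (u j) ≤ 2) : ∃ l < k, b = u l := by
  obtain ⟨c, hc⟩ := S.hcomp
  have huj : (⟨u j, S.hured j hj⟩ : redSet I1 I2) ∈ c.supp := by
    rw [hc]; exact ⟨j, hj, rfl⟩
  rw [SimpleGraph.ConnectedComponent.mem_supp_iff] at huj
  by_cases hbu : b = u j
  · exact ⟨j, hj, hbu⟩
  · have hadj : (Hgraph G I1 I2).Adj ⟨b, hb⟩ ⟨u j, S.hured j hj⟩ :=
      ⟨by simp [Subtype.ext_iff, hbu], hd⟩
    have : (⟨b, hb⟩ : redSet I1 I2) ∈ c.supp := by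
      rw [SimpleGraph.ConnectedComponent.mem_supp_iff, ← huj]
      exact SimpleGraph.ConnectedComponent.connectedComponentMk_eq_of_adj hadj
    rw [hc] at this
    obtain ⟨l, hl, hbl⟩ := this
    exact ⟨l, hl, hbl⟩

/-- Enumeration of the neighbours of `u j`. -/
lemma uNbrs (j : ℕ) (hj : j < k) :
    ∃ w, G.Adj (u j) w ∧ w ∈ I2 ∧ ∀ z, G.Adj (u j) z →
      (∃ l < blackCount k p2, z = v l) ∨
      (p2 = true ∧ (z = u 0 ∨ z = u (k - 1))) ∨ z = w := by
  have hk := S.hk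
  have h2bc := S.two_le_bc
  have hbck := S.bc_le (G := G) (I1 := I1) (I2 := I2) (u := u) (v := v)
  obtain ⟨n1, n2, hn1, hn2, hne, hD1, hD2⟩ :
      ∃ n1 n2, G.Adj (u j) n1 ∧ G.Adj (u j) n2 ∧ n1 ≠ n2 ∧
        ((∃ l < blackCount k p2, n1 = v l) ∨ (p2 = true ∧ (n1 = u 0 ∨ n1 = u (k - 1)))) ∧
        ((∃ l < blackCount k p2, n2 = v l) ∨ (p2 = true ∧ (n2 = u 0 ∨ n2 = u (k - 1)))) := by
    rcases Bool.eq_false_or_eq_true p2 with hp | hp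
    · have hbc : blackCount k p2 = k - 1 := by simp [blackCount, hp]
      by_cases hj0 : j = 0
      · subst hj0
        refine ⟨v 0, u (k - 1), S.hadj1 0 (by omega), (S.hp2adj hp).symm, ?_, ?_, ?_⟩
        · exact fun he => S.huv (k - 1) (by omega) 0 (by omega) he.symm
        · exact Or.inl ⟨0, by omega, rfl⟩
        · exact Or.inr ⟨hp, Or.inr rfl⟩
      by_cases hjk : j = k - 1
      · subst hjk
        have h2 := S.hadj2 (k - 2) (by omega)
        have hmod : (k - 2 + 1) % k = k - 1 := by
          rw [(by omega : k - 2 + 1 = k - 1)]; exact Nat.mod_eq_of_lt (by omega)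
        rw [hmod] at h2
        refine ⟨v (k - 2), u 0, h2.symm, S.hp2adj hp, ?_, ?_, ?_⟩
        · exact fun he => S.huv 0 (by omega) (k - 2) (by omega) he.symm
        · exact Or.inl ⟨k - 2, by omega, rfl⟩
        · exact Or.inr ⟨hp, Or.inl rfl⟩
      · have hjlt : j < k - 1 := by omega
        have h2 := S.hadj2 (j - 1) (by omega)
        have hmod : (j - 1 + 1) % k = j := by
          rw [Nat.sub_add_cancel (by omega)]; exact Nat.mod_eq_of_lt hj
        rw [hmod] at h2
        refine ⟨v j, v (j - 1), S.hadj1 j (by omega), h2.symm, ?_, ?_, ?_⟩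
        · intro he
          have := S.hvinj j (by omega) (j - 1) (by omega) he
          omega
        · exact Or.inl ⟨j, by omega, rfl⟩
        · exact Or.inl ⟨j - 1, by omega, rfl⟩
    · have hbc : blackCount k p2 = k := by simp [blackCount, hp]
      set j' := if j = 0 then k - 1 else j - 1 with hj'def
      have hj' : j' < blackCount k p2 := by rw [hbc]; simp only [hj'def]; split <;> omega
      have hmod : (j' + 1) % k = j := by
        simp only [hj'def]; split
        · rw [Nat.sub_add_cancel (by omega), Nat.mod_self]; omega
        · rw [Nat.sub_add_cancel (by omega)]; exact Nat.mod_eq_of_lt hj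
      have h2 := S.hadj2 j' hj'
      rw [hmod] at h2
      refine ⟨v j, v j', S.hadj1 j (by omega), h2.symm, ?_, ?_, ?_⟩
      · intro he
        have := S.hvinj j (by omega) j' hj' he
        simp only [hj'def] at this; revert this; split <;> omega
      · exact Or.inl ⟨j, by omega, rfl⟩
      · exact Or.inl ⟨j', hj', rfl⟩
  obtain ⟨t, hadjt, htn1, htn2, henum⟩ := third_nbr_s12 (S.hcubic (u j)) hn1 hn2 hne
  have hred := S.hured j hj
  obtain ⟨-, z0, hz0I2, hz0adj⟩ := red_has_nbr_in S.hmax S.hdisj S.hI1 S.hI2 hred.1 hred.2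
  have hDnotI2 : ∀ n, ((∃ l < blackCount k p2, n = v l) ∨
      (p2 = true ∧ (n = u 0 ∨ n = u (k - 1)))) → n ∉ I2 := by
    rintro n (⟨l, hl, rfl⟩ | ⟨hp, (rfl | rfl)⟩)
    · exact S.vI2 l hl
    · exact S.uI2 0 (by omega)
    · exact S.uI2 (k - 1) (by omega)
  have hteq : z0 = t := by
    rcases henum z0 hz0adj with h | h | h
    · exact absurd hz0I2 (h ▸ hDnotI2 n1 hD1)
    · exact absurd hz0I2 (h ▸ hDnotI2 n2 hD2)
    · exact h
  refine ⟨t, hadjt, hteq ▸ hz0I2, fun z hz => ?_⟩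
  rcases henum z hz with h | h | h
  · exact (h ▸ hD1).imp id Or.inl
  · exact (h ▸ hD2).imp id Or.inl
  · exact Or.inr (Or.inr h)

end CSetup

end Cycle
section Closure

set_option linter.unusedSectionVars false

variable {V : Type*} [Fintype V] [DecidableEq V] {G : SimpleGraph V} [DecidableRel G.Adj]
variable {I1 I2 : Finset V} {k : ℕ} {u v : ℕ → V} {p2 : Bool}

lemma walk_closed {W : Type*} {H : SimpleGraph W} {S : Set W}
    (hcl : ∀ a b, H.Adj a b → a ∈ S → b ∈ S) {a b : W} (p : H.Walk a b) :
    a ∈ S → b ∈ S := by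
  induction p with
  | nil => exact id
  | cons hadj p ih => exact fun ha => ih (hcl _ _ hadj ha)

lemma reach_closed {W : Type*} {H : SimpleGraph W} {S : Set W}
    (hcl : ∀ a b, H.Adj a b → a ∈ S → b ∈ S) {a b : W} (h : H.Reachable a b)
    (ha : a ∈ S) : b ∈ S := by
  obtain ⟨p⟩ := h
  exact walk_closed hcl p ha

/-- The "far" red vertices: red and not among the `u l`. -/
def RPred (I1 I2 : Finset V) (k : ℕ) (u : ℕ → V) (w : V) : Prop :=
  w ∉ I1 ∧ w ∉ I2 ∧ ∀ l < k, w ≠ u l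

namespace CSetup

variable (S : CSetup G I1 I2 k u v p2)
include S

lemma uRedNbr {j : ℕ} (hj : j < k) {z : V} (hadj : G.Adj (u j) z)
    (h1 : z ∉ I1) (h2 : z ∉ I2) :
    p2 = true ∧ (z = u 0 ∨ z = u (k - 1)) := by
  obtain ⟨w, -, hwI2, henum⟩ := S.uNbrs j hj
  rcases henum z hadj with ⟨l, hl, rfl⟩ | h | rfl
  · exact absurd (S.hblack l hl) h1
  · exact h
  · exact absurd hwI2 h2

lemma uI1Nbr {j : ℕ} (hj : j < k) {z : V} (hadj : G.Adj (u j) z) (h1 : z ∈ I1) :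
    ∃ l < blackCount k p2, z = v l := by
  have hk := S.hk
  obtain ⟨w, -, hwI2, henum⟩ := S.uNbrs j hj
  rcases henum z hadj with h | ⟨hp, (rfl | rfl)⟩ | rfl
  · exact h
  · exact absurd h1 (S.uI1 0 (by omega))
  · exact absurd h1 (S.uI1 (k - 1) (by omega))
  · exact absurd h1 (Finset.disjoint_right.mp S.hdisj hwI2)

lemma uAdjU {a b : ℕ} (ha : a < k) (hb : b < k) (hadj : G.Adj (u a) (u b)) :
    p2 = true ∧ (a = 0 ∨ a = k - 1) ∧ (b = 0 ∨ b = k - 1) := by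
  have hk := S.hk
  have hb' := S.uRedNbr ha hadj (S.uI1 b hb) (S.uI2 b hb)
  have ha' := S.uRedNbr hb hadj.symm (S.uI1 a ha) (S.uI2 a ha)
  refine ⟨hb'.1, ?_, ?_⟩
  · rcases ha'.2 with h | h
    · exact Or.inl (S.huinj a ha 0 (by omega) h)
    · exact Or.inr (S.huinj a ha (k - 1) (by omega) h)
  · rcases hb'.2 with h | h
    · exact Or.inl (S.huinj b hb 0 (by omega) h)
    · exact Or.inr (S.huinj b hb (k - 1) (by omega) h)

lemma no_RU_edge {w : V} (hw : RPred I1 I2 k u w) {j : ℕ} (hj : j < k)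
    (hadj : G.Adj (u j) w) : False := by
  have hk := S.hk
  rcases S.uRedNbr hj hadj hw.1 hw.2.1 with ⟨-, rfl | rfl⟩
  · exact hw.2.2 0 (by omega) rfl
  · exact hw.2.2 (k - 1) (by omega) rfl

lemma Rclosed : ∀ a c : redSet I1 I2, (G.induce (redSet I1 I2)).Adj a c →
    RPred I1 I2 k u ↑a → RPred I1 I2 k u ↑c := by
  rintro a c hadj ha
  have hc2 := c.2
  refine ⟨hc2.1, hc2.2, fun l hl he => ?_⟩
  have : G.Adj (u l) ↑a := by
    have : G.Adj ↑a ↑c := hadj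
    rw [he] at this
    exact this.symm
  exact S.no_RU_edge ha hl this

/-- Reachability from a `u` stays within the `u`s. -/
lemma reach_U {a b : ↥(redSet I1 I2)} (h : (G.induce (redSet I1 I2)).Reachable a b)
    (ha : ∃ l < k, (a : V) = u l) : ∃ l < k, (b : V) = u l := by
  refine reach_closed (S := {z : ↥(redSet I1 I2) | ∃ l < k, (z : V) = u l}) ?_ h ha
  rintro c d hadj ⟨l, hl, hc⟩
  have hadj' : G.Adj (u l) ↑d := by
    have : G.Adj (c : V) ↑d := hadj
    rwa [hc] at this
  have hk := S.hk
  rcases S.uRedNbr hl hadj' d.2.1 d.2.2 with ⟨-, h | h⟩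
  · exact ⟨0, by omega, h⟩
  · exact ⟨k - 1, by omega, h⟩

/-- Reachability between two `u`s forces equality or the `P2`-pair. -/
lemma reach_UU {a b : ℕ} (hak : a < k) (hbk : b < k)
    {pa : (u a) ∈ redSet I1 I2} {pb : (u b) ∈ redSet I1 I2}
    (h : (G.induce (redSet I1 I2)).Reachable ⟨u a, pa⟩ ⟨u b, pb⟩) :
    a = b ∨ (p2 = true ∧ (a = 0 ∨ a = k - 1) ∧ (b = 0 ∨ b = k - 1)) := by
  have hk := S.hk
  have hend := reach_closed
    (S := {z : ↥(redSet I1 I2) | (z : V) = u a ∨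
      (p2 = true ∧ (a = 0 ∨ a = k - 1) ∧ ((z : V) = u 0 ∨ (z : V) = u (k - 1)))}) ?_ h
    (Or.inl rfl)
  · rcases hend with h' | ⟨hp, hr, h'⟩
    · exact Or.inl (S.huinj a hak b hbk h'.symm)
    · refine Or.inr ⟨hp, hr, ?_⟩
      rcases h' with h' | h'
      · exact Or.inl (S.huinj b hbk 0 (by omega) h')
      · exact Or.inr (S.huinj b hbk (k - 1) (by omega) h')
  · rintro c d hadj hc
    have hcd : G.Adj (c : V) ↑d := hadj
    rcases hc with hc | ⟨hp, hr, hc | hc⟩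
    · have hadj' : G.Adj (u a) ↑d := by rwa [hc] at hcd
      obtain ⟨hp, hd⟩ := S.uRedNbr hak hadj' d.2.1 d.2.2
      have har : a = 0 ∨ a = k - 1 := by
        rcases hd with hd | hd
        · have : G.Adj (u 0) (u a) := by rw [← hc, ← hd]; exact hcd.symm
          rcases (S.uAdjU (by omega) hak this).2.2 with h | h
          · exact Or.inl h
          · exact Or.inr h
        · have : G.Adj (u (k - 1)) (u a) := by rw [← hc, ← hd]; exact hcd.symm
          rcases (S.uAdjU (by omega) hak this).2.2 with h | h
          · exact Or.inl h
          · exact Or.inr h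
      exact Or.inr ⟨hp, har, hd⟩
    · have hadj' : G.Adj (u 0) ↑d := by rwa [hc] at hcd
      obtain ⟨-, hd⟩ := S.uRedNbr (by omega) hadj' d.2.1 d.2.2
      exact Or.inr ⟨hp, hr, hd⟩
    · have hadj' : G.Adj (u (k - 1)) ↑d := by rwa [hc] at hcd
      obtain ⟨-, hd⟩ := S.uRedNbr (by omega) hadj' d.2.1 d.2.2
      exact Or.inr ⟨hp, hr, hd⟩

end CSetup

end Closure
section Monster

set_option linter.unusedSectionVars false
set_option maxHeartbeats 1000000

variable {V : Type*} [Fintype V] [DecidableEq V] {G : SimpleGraph V} [DecidableRel G.Adj]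
variable {I1 I2 : Finset V} {k : ℕ} {u v : ℕ → V} {p2 : Bool}

namespace CSetup

variable (S : CSetup G I1 I2 k u v p2)
include S

lemma reach_R_transfer {s' : Set V} (hsub : ∀ w, RPred I1 I2 k u w → w ∈ s')
    {a b : ↥(redSet I1 I2)} (p : (G.induce (redSet I1 I2)).Walk a b) :
    ∀ ha : RPred I1 I2 k u ↑a,
      ∃ hb : RPred I1 I2 k u ↑b,
        (G.induce s').Reachable ⟨↑a, hsub _ ha⟩ ⟨↑b, hsub _ hb⟩ := by
  induction p with
  | nil => exact fun ha => ⟨ha, SimpleGraph.Reachable.refl _⟩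
  | @cons a c b hadj q ih =>
    intro ha
    have hc : RPred I1 I2 k u ↑c := S.Rclosed _ _ hadj ha
    obtain ⟨hb, hr⟩ := ih hc
    have hadj' : (G.induce s').Adj ⟨↑a, hsub _ ha⟩ ⟨↑c, hsub _ hc⟩ := by
      exact (hadj : G.Adj (a : V) ↑c)
    exact ⟨hb, hadj'.reachable.trans hr⟩

lemma xred_contra {x y : V} {i : ℕ} (hi : i < blackCount k p2)
    (hxSu : ∀ l < k, x ≠ u l) (hxSv : ∀ l < blackCount k p2, x ≠ v l)
    (hySu : ∀ l < k, y ≠ u l) (hySv : ∀ l < blackCount k p2, y ≠ v l)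
    (hx1 : x ∉ I1) (hx2 : x ∉ I2) (hy2 : y ∈ I2)
    (hxy : G.Adj x y) (hyv : G.Adj y (v i)) : False := by
  classical
  have hk := S.hk
  have hbck : blackCount k p2 ≤ k := S.bc_le (G := G) (I1 := I1) (I2 := I2) (u := u) (v := v)
  have h2bc : 2 ≤ blackCount k p2 := S.two_le_bc
  have hy1 : y ∉ I1 := Finset.disjoint_right.mp S.hdisj hy2
  set bc := blackCount k p2 with hbcdef
  -- direction data
  set l0 : ℕ := if i = 0 then k - 1 else 0 with hl0def
  have hl0k : l0 < k := by rw [hl0def]; split <;> omega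
  set idx : Finset ℕ := if p2 = true then (Finset.range k).erase l0 else Finset.range k
    with hidxdef
  have hidx_sub : idx ⊆ Finset.range k := by
    rw [hidxdef]; split
    · exact Finset.erase_subset _ _
    · exact subset_rfl
  have hidx_card : idx.card = bc := by
    rw [hidxdef]
    split <;> rename_i hp
    · rw [Finset.card_erase_of_mem (Finset.mem_range.mpr hl0k), Finset.card_range,
        hbcdef]
      simp [blackCount, hp]
    · rw [Finset.card_range, hbcdef]
      simp [blackCount, Bool.not_eq_true _ ▸ hp]
  have hidx_mem : ∀ j, j < k → (p2 = true → j ≠ l0) → j ∈ idx := by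
    intro j hjk hj0
    rw [hidxdef]; split <;> rename_i hp
    · exact Finset.mem_erase.mpr ⟨hj0 hp, Finset.mem_range.mpr hjk⟩
    · exact Finset.mem_range.mpr hjk
  have hidx_mem' : ∀ j ∈ idx, j < k := fun j hj => Finset.mem_range.mp (hidx_sub hj)
  have hl0_not_idx : p2 = true → l0 ∉ idx := by
    intro hp
    rw [hidxdef, if_pos hp]
    exact Finset.notMem_erase _ _
  -- the swap sets
  set Vv : Finset V := (Finset.range bc).image v with hVvdef
  set Uu : Finset V := idx.image u with hUudef
  set K1 : Finset V := (I1 \ Vv) ∪ Uu with hK1def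
  set K2 : Finset V := insert (v i) (I2.erase y) with hK2def
  have hVv_mem : ∀ w, w ∈ Vv ↔ ∃ l < bc, w = v l := by
    intro w
    rw [hVvdef]
    simp only [Finset.mem_image, Finset.mem_range]
    exact ⟨fun ⟨l, hl, he⟩ => ⟨l, hl, he.symm⟩, fun ⟨l, hl, he⟩ => ⟨l, hl, he.symm⟩⟩
  have hUu_mem : ∀ w, w ∈ Uu ↔ ∃ l ∈ idx, w = u l := by
    intro w
    rw [hUudef]
    simp only [Finset.mem_image]
    exact ⟨fun ⟨l, hl, he⟩ => ⟨l, hl, he.symm⟩, fun ⟨l, hl, he⟩ => ⟨l, hl, he.symm⟩⟩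
  have hVv_sub : Vv ⊆ I1 := by
    intro w hw
    obtain ⟨l, hl, rfl⟩ := (hVv_mem w).mp hw
    exact S.hblack l hl
  have hVv_card : Vv.card = bc := by
    rw [hVvdef, Finset.card_image_of_injOn, Finset.card_range]
    intro a ha b hb he
    exact S.hvinj a (Finset.mem_range.mp ha) b (Finset.mem_range.mp hb) he
  have hUu_card : Uu.card = bc := by
    rw [hUudef, Finset.card_image_of_injOn, hidx_card]
    intro a ha b hb he
    exact S.huinj a (hidx_mem' a ha) b (hidx_mem' b hb) he
  have hUu_red : ∀ w ∈ Uu, w ∉ I1 ∧ w ∉ I2 := by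
    intro w hw
    obtain ⟨l, hl, rfl⟩ := (hUu_mem w).mp hw
    exact ⟨S.uI1 l (hidx_mem' l hl), S.uI2 l (hidx_mem' l hl)⟩
  have hK1card : K1.card = I1.card := by
    rw [hK1def, Finset.card_union_of_disjoint, Finset.card_sdiff_of_subset hVv_sub, hVv_card,
      hUu_card]
    · have : bc ≤ I1.card := hVv_card ▸ Finset.card_le_card hVv_sub
      omega
    · rw [Finset.disjoint_right]
      intro w hw hw'
      exact (hUu_red w hw).1 (Finset.mem_sdiff.mp hw').1
  have hvinotI2 : v i ∉ I2 := S.vI2 i hi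
  have hK2card : K2.card = I2.card := by
    rw [hK2def, Finset.card_insert_of_notMem, Finset.card_erase_of_mem hy2]
    · have : 1 ≤ I2.card := Finset.card_pos.mpr ⟨y, hy2⟩
      omega
    · intro hmem
      exact hvinotI2 (Finset.mem_of_mem_erase hmem)
  -- independence of K1
  have hK1mem : ∀ w, w ∈ K1 ↔ (w ∈ I1 ∧ w ∉ Vv) ∨ ∃ l ∈ idx, w = u l := by
    intro w
    rw [hK1def, Finset.mem_union, Finset.mem_sdiff, hUu_mem]
  have hK1ind : FinsetIndep G K1 := by
    intro a ha b hb hadj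
    rcases (hK1mem a).mp ha with ⟨ha1, haV⟩ | ⟨la, hla, rfl⟩
    · rcases (hK1mem b).mp hb with ⟨hb1, hbV⟩ | ⟨lb, hlb, rfl⟩
      · exact S.hI1 a ha1 b hb1 hadj
      · obtain ⟨l, hl, he⟩ := S.uI1Nbr (hidx_mem' lb hlb) hadj.symm ha1
        exact haV ((hVv_mem a).mpr ⟨l, hl, he⟩)
    · rcases (hK1mem b).mp hb with ⟨hb1, hbV⟩ | ⟨lb, hlb, rfl⟩
      · obtain ⟨l, hl, he⟩ := S.uI1Nbr (hidx_mem' la hla) hadj hb1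
        exact hbV ((hVv_mem b).mpr ⟨l, hl, he⟩)
      · obtain ⟨hp, hone, htwo⟩ :=
          S.uAdjU (hidx_mem' la hla) (hidx_mem' lb hlb) hadj
        have hl0or : l0 = 0 ∨ l0 = k - 1 := by rw [hl0def]; split <;> simp
        have hla0 := hl0_not_idx hp
        -- both la and lb are in {0, k-1} but l0 ∈ {0, k-1} is excluded and la ≠ lb
        have hlane : la ≠ lb := by
          intro he
          subst he
          exact G.loopless.irrefl _ hadj
        have hcases : la = l0 ∨ lb = l0 := by
          rcases hone with h1 | h1 <;> rcases htwo with h2 | h2 <;>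
            rcases hl0or with h0 | h0 <;> omega
        rcases hcases with h | h
        · exact hla0 (h ▸ hla)
        · exact hla0 (h ▸ hlb)
  -- the cycle neighbours of v i
  have hii1 : i ≠ (i + 1) % k := by
    rcases Nat.lt_or_ge (i + 1) k with h | h
    · rw [Nat.mod_eq_of_lt h]; omega
    · have : i + 1 = k := by omega
      rw [this, Nat.mod_self]; omega
  have hi1k : (i + 1) % k < k := Nat.mod_lt _ (by omega)
  have henumv : ∀ z, G.Adj (v i) z → z = u i ∨ z = u ((i + 1) % k) ∨ z = y := by
    have hne : u i ≠ u ((i + 1) % k) := by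
      intro he
      exact hii1 (S.huinj i (by omega) _ hi1k he)
    obtain ⟨t, hadjt, htne1, htne2, henum⟩ :=
      third_nbr_s12 (S.hcubic (v i)) (S.hadj1 i hi).symm (S.hadj2 i hi) hne
    have hyt : y = t := by
      rcases henum y hyv.symm with h | h | h
      · exact absurd h (hySu i (by omega))
      · exact absurd h (hySu _ hi1k)
      · exact h
    intro z hz
    rcases henum z hz with h | h | h
    · exact Or.inl h
    · exact Or.inr (Or.inl h)
    · exact Or.inr (Or.inr (hyt ▸ h))
  -- independence of K2
  have hK2mem : ∀ w, w ∈ K2 ↔ w = v i ∨ (w ∈ I2 ∧ w ≠ y) := by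
    intro w
    rw [hK2def, Finset.mem_insert, Finset.mem_erase]
    tauto
  have hK2ind : FinsetIndep G K2 := by
    have key : ∀ b ∈ I2, b ≠ y → ¬ G.Adj (v i) b := by
      intro b hb hby hadj
      rcases henumv b hadj with h | h | h
      · exact S.uI2 i (by omega) (h ▸ hb)
      · exact S.uI2 _ hi1k (h ▸ hb)
      · exact hby h
    intro a ha b hb hadj
    rcases (hK2mem a).mp ha with rfl | ⟨ha2, hay⟩
    · rcases (hK2mem b).mp hb with rfl | ⟨hb2, hby⟩
      · exact G.loopless.irrefl _ hadj
      · exact key b hb2 hby hadj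
    · rcases (hK2mem b).mp hb with rfl | ⟨hb2, hby⟩
      · exact key a ha2 hay hadj.symm
      · exact S.hI2 a ha2 b hb2 hadj
  -- disjointness
  have hKdisj : Disjoint K1 K2 := by
    rw [Finset.disjoint_left]
    intro w hw1 hw2
    rcases (hK2mem w).mp hw2 with hwv | ⟨hw2', hwy⟩
    · rw [hwv] at hw1
      rcases (hK1mem (v i)).mp hw1 with ⟨h1, hV⟩ | ⟨l, hl, he⟩
      · exact hV ((hVv_mem _).mpr ⟨i, hi, rfl⟩)
      · exact S.huv l (hidx_mem' l hl) i hi he.symm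
    · rcases (hK1mem w).mp hw1 with ⟨h1, hV⟩ | ⟨l, hl, rfl⟩
      · exact Finset.disjoint_left.mp S.hdisj h1 hw2'
      · exact S.uI2 l (hidx_mem' l hl) hw2'
  -- Condition (I) for the new pair
  have hKcondI : CondI G K1 K2 := by
    intro J1 J2 hd h1 h2
    rw [hK1card, hK2card]
    exact S.hmax J1 J2 hd h1 h2
  -- characterization of the red set of the new pair
  have hmemredK : ∀ w : V, w ∈ redSet K1 K2 ↔
      (RPred I1 I2 k u w ∨ w = y ∨ (∃ j, j < bc ∧ j ≠ i ∧ w = v j) ∨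
        (p2 = true ∧ w = u l0)) := by
    intro w
    constructor
    · rintro ⟨hw1, hw2⟩
      have h1 : ¬((w ∈ I1 ∧ w ∉ Vv) ∨ ∃ l ∈ idx, w = u l) :=
        fun h => hw1 ((hK1mem w).mpr h)
      have h2 : ¬(w = v i ∨ (w ∈ I2 ∧ w ≠ y)) := fun h => hw2 ((hK2mem w).mpr h)
      push_neg at h1 h2
      by_cases hw2' : w ∈ I2
      · exact Or.inr (Or.inl (h2.2 hw2'))
      by_cases hw1' : w ∈ I1
      · obtain ⟨j, hj, rfl⟩ := (hVv_mem w).mp (h1.1 hw1')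
        refine Or.inr (Or.inr (Or.inl ⟨j, hj, ?_, rfl⟩))
        intro he
        exact h2.1 (he ▸ rfl)
      by_cases hwu : ∃ l, l < k ∧ w = u l
      · obtain ⟨l, hlk, rfl⟩ := hwu
        have : ¬(p2 = true → l ≠ l0) := by
          intro h
          exact h1.2 l (hidx_mem l hlk h) rfl
        push_neg at this
        exact Or.inr (Or.inr (Or.inr ⟨this.1, by rw [this.2]⟩))
      · refine Or.inl ⟨hw1', hw2', fun l hl he => hwu ⟨l, hl, he⟩⟩
    · intro h
      have hmem : w ∉ K1 ∧ w ∉ K2 := by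
        rcases h with hR | hwy | ⟨j, hj, hji, rfl⟩ | ⟨hp, rfl⟩
        · constructor
          · intro hmem
            rcases (hK1mem w).mp hmem with ⟨h1, -⟩ | ⟨l, hl, he⟩
            · exact hR.1 h1
            · exact hR.2.2 l (hidx_mem' l hl) he
          · intro hmem
            rcases (hK2mem w).mp hmem with he | ⟨h2, -⟩
            · exact hR.1 (he ▸ S.hblack i hi)
            · exact hR.2.1 h2
        · rw [hwy]
          constructor
          · intro hmem
            rcases (hK1mem y).mp hmem with ⟨h1, -⟩ | ⟨l, hl, he⟩
            · exact hy1 h1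
            · exact hySu l (hidx_mem' l hl) he
          · intro hmem
            rcases (hK2mem y).mp hmem with he | ⟨-, hy'⟩
            · exact hySv i hi he
            · exact hy' rfl
        · constructor
          · intro hmem
            rcases (hK1mem (v j)).mp hmem with ⟨-, hV⟩ | ⟨l, hl, he⟩
            · exact hV ((hVv_mem _).mpr ⟨j, hj, rfl⟩)
            · exact S.huv l (hidx_mem' l hl) j hj he.symm
          · intro hmem
            rcases (hK2mem (v j)).mp hmem with he | ⟨h2, -⟩
            · exact hji (S.hvinj j hj i hi he)
            · exact S.vI2 j hj h2
        · constructor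
          · intro hmem
            rcases (hK1mem (u l0)).mp hmem with ⟨h1, -⟩ | ⟨l, hl, he⟩
            · exact S.uI1 l0 hl0k h1
            · exact hl0_not_idx hp (S.huinj l (hidx_mem' l hl) l0 hl0k he.symm ▸ hl)
          · intro hmem
            rcases (hK2mem (u l0)).mp hmem with he | ⟨h2, -⟩
            · exact S.huv l0 hl0k i hi he
            · exact S.uI2 l0 hl0k h2
      exact hmem
  -- memberships
  have hxRP : RPred I1 I2 k u x := ⟨hx1, hx2, hxSu⟩
  have hRsubK : ∀ w, RPred I1 I2 k u w → w ∈ redSet K1 K2 :=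
    fun w h => (hmemredK w).mpr (Or.inl h)
  have hRsubI : ∀ w, RPred I1 I2 k u w → w ∈ redSet I1 I2 := fun w h => ⟨h.1, h.2.1⟩
  have hxK : x ∈ redSet K1 K2 := hRsubK x hxRP
  have hyK : y ∈ redSet K1 K2 := (hmemredK y).mpr (Or.inr (Or.inl rfl))
  -- the reindexing function and the missed index
  set gf : ℕ → ℕ := fun j => if p2 = true ∧ i = 0 then j + 1 else j with hgfdef
  set m : ℕ := if p2 = true ∧ i = 0 then 1 else i with hmdef
  have hbcp2 : p2 = true → bc = k - 1 := by
    intro hp; rw [hbcdef]; simp [blackCount, hp]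
  have hgk : ∀ j, j < bc → j ≠ i → gf j < k := by
    intro j hj hji
    by_cases hdir : p2 = true ∧ i = 0
    · have := hbcp2 hdir.1
      simp only [hgfdef, if_pos hdir]
      omega
    · simp only [hgfdef, if_neg hdir]
      omega
  have hmk : m < k := by
    by_cases hdir : p2 = true ∧ i = 0
    · simp only [hmdef, if_pos hdir]; omega
    · simp only [hmdef, if_neg hdir]; omega
  have hginj : ∀ j j', gf j = gf j' → j = j' := by
    intro j j'
    by_cases hdir : p2 = true ∧ i = 0
    · simp only [hgfdef, if_pos hdir]; omega
    · simp only [hgfdef, if_neg hdir]; omega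
  have hgne_m : ∀ j, j < bc → j ≠ i → gf j ≠ m := by
    intro j hj hji
    by_cases hdir : p2 = true ∧ i = 0
    · have := hdir.2
      simp only [hgfdef, hmdef, if_pos hdir]
      omega
    · simp only [hgfdef, hmdef, if_neg hdir]
      exact hji
  have hpairm : p2 = true → ¬(m = 0 ∨ m = k - 1) := by
    intro hp
    have hbc' := hbcp2 hp
    by_cases hdir : p2 = true ∧ i = 0
    · simp only [hmdef, if_pos hdir]; omega
    · have : i ≠ 0 := fun h => hdir ⟨hp, h⟩
      simp only [hmdef, if_neg hdir]
      omega
  have hpairg : p2 = true → ∀ j j', j < bc → j ≠ i → j' < bc → j' ≠ i →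
      (gf j = 0 ∨ gf j = k - 1) → (gf j' = 0 ∨ gf j' = k - 1) → j = j' := by
    intro hp j j' hj hji hj' hji'
    have hbc' := hbcp2 hp
    by_cases hdir : p2 = true ∧ i = 0
    · simp only [hgfdef, if_pos hdir]; omega
    · have : i ≠ 0 := fun h => hdir ⟨hp, h⟩
      simp only [hgfdef, if_neg hdir]
      omega
  -- the component graphs
  set GI := G.induce (redSet I1 I2) with hGIdef
  set GK := G.induce (redSet K1 K2) with hGKdef
  set P : GK.ConnectedComponent → Prop := fun c =>
    ∃ w, RPred I1 I2 k u w ∧ ∃ hw : w ∈ redSet K1 K2,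
      GK.connectedComponentMk ⟨w, hw⟩ = c with hPdef
  have hPQ : ∀ c : GK.ConnectedComponent, ¬ P c →
      ∃ j, j < bc ∧ j ≠ i ∧ ∃ hw : v j ∈ redSet K1 K2,
        GK.connectedComponentMk ⟨v j, hw⟩ = c := by
    intro c hPc
    obtain ⟨w, rfl⟩ := Quot.exists_rep c
    rcases (hmemredK ↑w).mp w.2 with hR | hwy | ⟨j, hj, hji, hwv⟩ | ⟨hp, hwu⟩
    · exact absurd ⟨↑w, hR, w.2, rfl⟩ hPc
    · exfalso
      apply hPc
      refine ⟨x, hxRP, hxK, ?_⟩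
      apply SimpleGraph.ConnectedComponent.connectedComponentMk_eq_of_adj
      show G.Adj x ↑w
      rw [hwy]
      exact hxy
    · have hvjK : v j ∈ redSet K1 K2 :=
        (hmemredK (v j)).mpr (Or.inr (Or.inr (Or.inl ⟨j, hj, hji, rfl⟩)))
      refine ⟨j, hj, hji, hvjK, ?_⟩
      exact congrArg GK.connectedComponentMk
        (Subtype.ext hwv.symm : (⟨v j, hvjK⟩ : ↥(redSet K1 K2)) = w)
    · have hbc' := hbcp2 hp
      by_cases hi0 : i = 0
      · have hl0v : l0 = k - 1 := by rw [hl0def, if_pos hi0]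
        have hj0 : k - 2 < bc := by omega
        have hji0 : k - 2 ≠ i := by omega
        have hadjvu : G.Adj (v (k - 2)) (u l0) := by
          have h2 := S.hadj2 (k - 2) hj0
          have hmod : (k - 2 + 1) % k = k - 1 := by
            rw [(by omega : k - 2 + 1 = k - 1)]
            exact Nat.mod_eq_of_lt (by omega)
          rw [hmod] at h2
          rw [hl0v]
          exact h2
        refine ⟨k - 2, hj0, hji0,
          (hmemredK (v (k - 2))).mpr (Or.inr (Or.inr (Or.inl ⟨k - 2, hj0, hji0, rfl⟩))), ?_⟩
        apply SimpleGraph.ConnectedComponent.connectedComponentMk_eq_of_adj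
        show G.Adj (v (k - 2)) ↑w
        rw [hwu]
        exact hadjvu
      · have hl0v : l0 = 0 := by rw [hl0def, if_neg hi0]
        have hj0 : 0 < bc := by omega
        have hji0 : (0 : ℕ) ≠ i := fun h => hi0 h.symm
        have hadjvu : G.Adj (v 0) (u l0) := by
          rw [hl0v]
          exact (S.hadj1 0 hj0).symm
        refine ⟨0, hj0, hji0,
          (hmemredK (v 0)).mpr (Or.inr (Or.inr (Or.inl ⟨0, hj0, hji0, rfl⟩))), ?_⟩
        apply SimpleGraph.ConnectedComponent.connectedComponentMk_eq_of_adj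
        show G.Adj (v 0) ↑w
        rw [hwu]
        exact hadjvu
  -- the injection on components
  set f : GK.ConnectedComponent → GI.ConnectedComponent := fun c =>
    if hP : P c then
      GI.connectedComponentMk
        ⟨Classical.choose hP, hRsubI _ (Classical.choose_spec hP).1⟩
    else
      GI.connectedComponentMk
        ⟨u (gf (Classical.choose (hPQ c hP))),
          S.hured _ (hgk _ (Classical.choose_spec (hPQ c hP)).1
            (Classical.choose_spec (hPQ c hP)).2.1)⟩
    with hfdef
  have hinj : Function.Injective f := by
    intro c c' he
    simp only [hfdef] at he
    by_cases hP : P c <;> by_cases hP' : P c'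
    · rw [dif_pos hP, dif_pos hP'] at he
      obtain ⟨hw1, hc1⟩ := (Classical.choose_spec hP).2
      obtain ⟨hw2, hc2⟩ := (Classical.choose_spec hP').2
      obtain ⟨p⟩ := SimpleGraph.ConnectedComponent.eq.mp he
      obtain ⟨hb, hrK⟩ := S.reach_R_transfer hRsubK p (Classical.choose_spec hP).1
      rw [← hc1, ← hc2]
      exact SimpleGraph.ConnectedComponent.sound hrK
    · rw [dif_pos hP, dif_neg hP'] at he
      exfalso
      have hre := (SimpleGraph.ConnectedComponent.eq.mp he).symm
      obtain ⟨l, hl, hul⟩ := S.reach_U hre ⟨_, hgk _ (Classical.choose_spec (hPQ c' hP')).1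
        (Classical.choose_spec (hPQ c' hP')).2.1, rfl⟩
      exact (Classical.choose_spec hP).1.2.2 l hl hul
    · rw [dif_neg hP, dif_pos hP'] at he
      exfalso
      have hre := SimpleGraph.ConnectedComponent.eq.mp he
      obtain ⟨l, hl, hul⟩ := S.reach_U hre ⟨_, hgk _ (Classical.choose_spec (hPQ c hP)).1
        (Classical.choose_spec (hPQ c hP)).2.1, rfl⟩
      exact (Classical.choose_spec hP').1.2.2 l hl hul
    · rw [dif_neg hP, dif_neg hP'] at he
      have hre := SimpleGraph.ConnectedComponent.eq.mp he
      have hjj' := S.reach_UU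
        (hgk _ (Classical.choose_spec (hPQ c hP)).1 (Classical.choose_spec (hPQ c hP)).2.1)
        (hgk _ (Classical.choose_spec (hPQ c' hP')).1 (Classical.choose_spec (hPQ c' hP')).2.1)
        hre
      have hjeq : Classical.choose (hPQ c hP) = Classical.choose (hPQ c' hP') := by
        rcases hjj' with heq | ⟨hp, h1, h2⟩
        · exact hginj _ _ heq
        · exact hpairg hp _ _
            (Classical.choose_spec (hPQ c hP)).1 (Classical.choose_spec (hPQ c hP)).2.1
            (Classical.choose_spec (hPQ c' hP')).1 (Classical.choose_spec (hPQ c' hP')).2.1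
            h1 h2
      obtain ⟨hw1, hc1⟩ := (Classical.choose_spec (hPQ c hP)).2.2
      obtain ⟨hw2, hc2⟩ := (Classical.choose_spec (hPQ c' hP')).2.2
      rw [← hc1, ← hc2]
      exact congrArg GK.connectedComponentMk (Subtype.ext (congrArg v hjeq))
  have hmiss : ∀ c, f c ≠ GI.connectedComponentMk ⟨u m, S.hured m hmk⟩ := by
    intro c he
    simp only [hfdef] at he
    by_cases hP : P c
    · rw [dif_pos hP] at he
      have hre := (SimpleGraph.ConnectedComponent.eq.mp he).symm
      obtain ⟨l, hl, hul⟩ := S.reach_U hre ⟨m, hmk, rfl⟩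
      exact (Classical.choose_spec hP).1.2.2 l hl hul
    · rw [dif_neg hP] at he
      have hre := SimpleGraph.ConnectedComponent.eq.mp he
      have hjm := S.reach_UU
        (hgk _ (Classical.choose_spec (hPQ c hP)).1 (Classical.choose_spec (hPQ c hP)).2.1)
        hmk hre
      rcases hjm with heq | ⟨hp, h1, h2⟩
      · exact hgne_m _ (Classical.choose_spec (hPQ c hP)).1
          (Classical.choose_spec (hPQ c hP)).2.1 heq
      · exact hpairm hp h2
  -- conclude by counting components
  have hFinj : Function.Injective
      (fun o : Option (GK.ConnectedComponent) =>
        Option.elim o (GI.connectedComponentMk ⟨u m, S.hured m hmk⟩) f) := by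
    intro o o' he
    cases o with
    | none =>
      cases o' with
      | none => rfl
      | some c => exact absurd he.symm (hmiss c)
    | some c =>
      cases o' with
      | none => exact absurd he (hmiss c)
      | some c' => exact congrArg some (hinj he)
  have hle := Nat.card_le_card_of_injective _ hFinj
  rw [Finite.card_option] at hle
  have hmono := S.hmin K1 K2 hKdisj hK1ind hK2ind hKcondI
  have e1 : numRedComp G I1 I2 = Nat.card (GI.ConnectedComponent) := by rw [hGIdef]; rfl
  have e2 : numRedComp G K1 K2 = Nat.card (GK.ConnectedComponent) := by rw [hGKdef]; rfl
  rw [e1, e2] at hmono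
  omega

end CSetup

end Monster
section Final

set_option linter.unusedSectionVars false
set_option maxHeartbeats 1000000

variable {V : Type*} [Fintype V] [DecidableEq V] {G : SimpleGraph V} [DecidableRel G.Adj]

lemma two_le_of_not_le_one {e : ℕ∞} (h : ¬ e ≤ 1) : 2 ≤ e := by
  rw [not_le] at h
  exact Order.add_one_le_of_lt h

lemma three_le_of_not_le_two {e : ℕ∞} (h : ¬ e ≤ 2) : 3 ≤ e := by
  rw [not_le] at h
  exact Order.add_one_le_of_lt h

lemma adj_adj_edist_le_two {a b c : V} (h1 : G.Adj a b) (h2 : G.Adj b c) :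
    G.edist a c ≤ 2 := by
  have ht : G.edist a c ≤ G.edist a b + G.edist b c := SimpleGraph.edist_triangle
  rw [SimpleGraph.edist_eq_one_iff_adj.mpr h1, SimpleGraph.edist_eq_one_iff_adj.mpr h2] at ht
  exact ht.trans_eq (by norm_num)

end Final
/-- Under Conditions (I) and (II) and the cycle setup with all black vertices of
`C'` in `I1`: a vertex `x` off `C'` with `d(x, C') ≤ 2` is black; more precisely
`d(x,C') = 1` forces `x ∈ I2` and `d(x,C') = 2` forces `x ∈ I1`. -/
theorem vertices_near_cycle
    {V : Type*} [Fintype V] [DecidableEq V] (G : SimpleGraph V) [DecidableRel G.Adj]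
    (hconn : G.Connected) (hcubic : ∀ v : V, G.degree v = 3)
    (I1 I2 : Finset V) (hdisj : Disjoint I1 I2)
    (hI1 : FinsetIndep G I1) (hI2 : FinsetIndep G I2)
    (hmax : CondI G I1 I2) (hmin : CondII G I1 I2)
    (k : ℕ) (u v : ℕ → V) (p2 : Bool)
    (hcyc : CycleSetup G I1 I2 k u v p2)
    (hblack : ∀ i < blackCount k p2, v i ∈ I1)
    (x : V) (hx : x ∉ cycleVerts k u v p2) :
    ((⨅ y ∈ cycleVerts k u v p2, G.edist x y) ≤ 2 → x ∈ I1 ∪ I2) ∧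
    ((⨅ y ∈ cycleVerts k u v p2, G.edist x y) = 1 → x ∈ I2) ∧
    ((⨅ y ∈ cycleVerts k u v p2, G.edist x y) = 2 → x ∈ I1) := by
  classical
  obtain ⟨hk, hured, -, huinj, hvinj, huv, hadj1, hadj2, hp2adj, hcomp⟩ := hcyc
  have S : CSetup G I1 I2 k u v p2 :=
    ⟨hcubic, hdisj, hI1, hI2, hmax, hmin, hk, hured, huinj, hvinj, huv,
      hadj1, hadj2, hp2adj, hcomp, hblack⟩
  have hbck : blackCount k p2 ≤ k := S.bc_le
  have hxSu : ∀ l < k, x ≠ u l := fun l hl he => hx (Or.inl ⟨l, hl, he⟩)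
  have hxSv : ∀ l < blackCount k p2, x ≠ v l := fun l hl he => hx (Or.inr ⟨l, hl, he⟩)
  set dd := ⨅ y ∈ cycleVerts k u v p2, G.edist x y with hdd
  have hlow : ∀ z ∈ cycleVerts k u v p2, dd ≤ G.edist x z := fun z hz => iInf₂_le z hz
  have hone : (1 : ℕ∞) ≤ dd := by
    refine le_iInf₂ fun z hz => ?_
    have hne : x ≠ z := by
      rintro rfl
      exact hx hz
    exact Order.one_le_iff_pos.mpr (SimpleGraph.edist_pos_of_ne hne)
  -- case distance 1
  have case1 : dd = 1 → x ∈ I2 := by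
    intro hd1
    obtain ⟨z, hz, hz1⟩ : ∃ z ∈ cycleVerts k u v p2, G.edist x z ≤ 1 := by
      by_contra hcon
      push_neg at hcon
      have : (2 : ℕ∞) ≤ dd := le_iInf₂ fun z hz => Order.add_one_le_of_lt (hcon z hz)
      rw [hd1] at this
      norm_num at this
    have hxz : G.Adj x z := by
      have hne : x ≠ z := by rintro rfl; exact hx hz
      have : G.edist x z = 1 :=
        le_antisymm hz1 (Order.one_le_iff_pos.mpr (SimpleGraph.edist_pos_of_ne hne))
      exact SimpleGraph.edist_eq_one_iff_adj.mp this
    by_cases hx2 : x ∈ I2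
    · exact hx2
    exfalso
    by_cases hx1 : x ∈ I1
    · -- x is in I1, adjacent to the cycle
      rcases hz with ⟨l, hl, rfl⟩ | ⟨l, hl, rfl⟩
      · obtain ⟨l', hl', he⟩ := S.uI1Nbr hl hxz.symm hx1
        exact hxSv l' hl' he
      · exact hI1 x hx1 (v l) (hblack l hl) hxz
    · -- x is red, adjacent to the cycle
      have hxred : x ∈ redSet I1 I2 := ⟨hx1, hx2⟩
      rcases hz with ⟨l, hl, rfl⟩ | ⟨l, hl, rfl⟩
      · obtain ⟨l', hl', he⟩ := S.red_close x hxred l hl (hz1.trans (by norm_num))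
        exact hxSu l' hl' he
      · have hle2 : G.edist x (u l) ≤ 2 :=
          adj_adj_edist_le_two hxz (S.hadj1 l hl).symm
        obtain ⟨l', hl', he⟩ := S.red_close x hxred l (by omega) hle2
        exact hxSu l' hl' he
  -- case distance 2
  have case2 : dd = 2 → x ∈ I1 := by
    intro hd2
    obtain ⟨z, hz, hz2⟩ : ∃ z ∈ cycleVerts k u v p2, G.edist x z ≤ 2 := by
      by_contra hcon
      push_neg at hcon
      have : (3 : ℕ∞) ≤ dd := le_iInf₂ fun z hz => Order.add_one_le_of_lt (hcon z hz)
      rw [hd2] at this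
      norm_num at this
    have hzlow : (2 : ℕ∞) ≤ G.edist x z := hd2 ▸ hlow z hz
    have hz2' : G.edist x z = ((2 : ℕ) : ℕ∞) := by
      exact_mod_cast le_antisymm hz2 hzlow
    obtain ⟨p, hp⟩ := SimpleGraph.exists_walk_of_edist_eq_coe hz2'
    set w := p.getVert 1 with hwdef
    have hxw : G.Adj x w := by
      have := p.adj_getVert_succ (i := 0) (by omega)
      rwa [SimpleGraph.Walk.getVert_zero] at this
    have hwz : G.Adj w z := by
      have := p.adj_getVert_succ (i := 1) (by omega)
      have h2 : p.getVert 2 = z := by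
        have := SimpleGraph.Walk.getVert_length p
        rwa [hp] at this
      rwa [h2] at this
    have hwS : w ∉ cycleVerts k u v p2 := by
      intro hwmem
      have := hlow w hwmem
      rw [hd2, SimpleGraph.edist_eq_one_iff_adj.mpr hxw] at this
      norm_num at this
    have hwSu : ∀ l < k, w ≠ u l := fun l hl he => hwS (Or.inl ⟨l, hl, he⟩)
    have hwSv : ∀ l < blackCount k p2, w ≠ v l := fun l hl he => hwS (Or.inr ⟨l, hl, he⟩)
    -- the middle vertex w is in I2
    have hw2 : w ∈ I2 := by
      by_contra hw2
      by_cases hw1 : w ∈ I1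
      · rcases hz with ⟨l, hl, rfl⟩ | ⟨l, hl, rfl⟩
        · obtain ⟨l', hl', he⟩ := S.uI1Nbr hl hwz.symm hw1
          exact hwSv l' hl' he
        · exact hI1 w hw1 (v l) (hblack l hl) hwz
      · have hwred : w ∈ redSet I1 I2 := ⟨hw1, hw2⟩
        rcases hz with ⟨l, hl, rfl⟩ | ⟨l, hl, rfl⟩
        · obtain ⟨l', hl', he⟩ := S.red_close w hwred l hl
            ((SimpleGraph.edist_eq_one_iff_adj.mpr hwz).le.trans (by norm_num))
          exact hwSu l' hl' he
        · have hle2 : G.edist w (u l) ≤ 2 :=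
            adj_adj_edist_le_two hwz (S.hadj1 l hl).symm
          obtain ⟨l', hl', he⟩ := S.red_close w hwred l (by omega) hle2
          exact hwSu l' hl' he
    have hx2 : x ∉ I2 := fun hx2 => hI2 x hx2 w hw2 hxw
    by_cases hx1 : x ∈ I1
    · exact hx1
    exfalso
    -- x is red
    have hxred : x ∈ redSet I1 I2 := ⟨hx1, hx2⟩
    rcases hz with ⟨l, hl, rfl⟩ | ⟨l, hl, rfl⟩
    · obtain ⟨l', hl', he⟩ := S.red_close x hxred l hl (adj_adj_edist_le_two hxw hwz)
      exact hxSu l' hl' he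
    · exact S.xred_contra hl hxSu hxSv hwSu hwSv hx1 hx2 hw2 hxw hwz
  refine ⟨?_, case1, case2⟩
  intro hle2
  have hddne : dd ≠ ⊤ := fun h => by rw [h] at hle2; norm_num at hle2
  obtain ⟨n, hn⟩ : ∃ n : ℕ, dd = (n : ℕ∞) := ⟨dd.toNat, (ENat.coe_toNat hddne).symm⟩
  have hn1 : 1 ≤ n := by
    rw [hn] at hone
    exact_mod_cast hone
  have hn2 : n ≤ 2 := by
    rw [hn] at hle2
    exact_mod_cast hle2
  rcases (by omega : n = 1 ∨ n = 2) with h | h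
  · have : dd = 1 := by rw [hn, h]; norm_num
    exact Finset.mem_union.mpr (Or.inr (case1 this))
  · have : dd = 2 := by rw [hn, h]; norm_num
    exact Finset.mem_union.mpr (Or.inl (case2 this))
end

section
/- Let G be a finite connected cubic graph containing ten distinct vertices u1, v1, u2, v2, u3, v3, u1', u2', u3', w such that u1 v1 u2 v2 u3 v3 u1 is a 6-cycle of G and G contains the edges u1u1', u2u2', u3u3', u1'v2, u2'v3, u3'v1, wu1', wu2', wu3'. Then G is isomorphic to the Petersen graph. -/
open SimpleGraph

/-- The Petersen graph as the Kneser graph `K(5,2)`. -/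
def petersenGraph : SimpleGraph {s : Finset (Fin 5) // s.card = 2} where
  Adj a b := Disjoint a.1 b.1
  symm := ⟨fun a b h => h.symm⟩
  loopless := by
    constructor
    intro a h
    rw [disjoint_self] at h
    have := a.2
    simp [h] at this

instance : DecidableRel petersenGraph.Adj :=
  fun a b => inferInstanceAs (Decidable (Disjoint a.1 b.1))

/-- Explicit labeling of the ten configuration vertices by Petersen vertices. -/
def petersenMap : Fin 10 → {s : Finset (Fin 5) // s.card = 2} :=
  ![⟨{0,4}, by decide⟩, ⟨{1,2}, by decide⟩, ⟨{0,3}, by decide⟩, ⟨{1,4}, by decide⟩,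
    ⟨{0,2}, by decide⟩, ⟨{1,3}, by decide⟩, ⟨{2,3}, by decide⟩, ⟨{2,4}, by decide⟩,
    ⟨{3,4}, by decide⟩, ⟨{0,1}, by decide⟩]

/-- Neighbor table of the configuration. -/
def nborIdx : Fin 10 → Fin 3 → Fin 10 :=
  ![![1,5,6], ![0,2,8], ![1,3,7], ![2,4,6], ![3,5,8], ![4,0,7],
    ![0,3,9], ![2,5,9], ![4,1,9], ![6,7,8]]

lemma petersenMap_bij : Function.Bijective petersenMap := by decide

lemma petersen_key_iff : ∀ i j : Fin 10,
    (j = nborIdx i 0 ∨ j = nborIdx i 1 ∨ j = nborIdx i 2) ↔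
      petersenGraph.Adj (petersenMap i) (petersenMap j) := by decide

lemma nbhd_eq_of_degree_three {V : Type*} [Fintype V] [DecidableEq V]
    (G : SimpleGraph V) [DecidableRel G.Adj]
    {a x y z : V} (hdeg : G.degree a = 3)
    (hxy : x ≠ y) (hxz : x ≠ z) (hyz : y ≠ z)
    (hx : G.Adj a x) (hy : G.Adj a y) (hz : G.Adj a z) :
    G.neighborFinset a = {x, y, z} := by
  have hsub : ({x, y, z} : Finset V) ⊆ G.neighborFinset a := by
    intro t ht
    simp only [Finset.mem_insert, Finset.mem_singleton] at ht
    rcases ht with rfl | rfl | rfl <;> simpa [SimpleGraph.mem_neighborFinset]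
  have hcard : ({x, y, z} : Finset V).card = 3 := by
    rw [Finset.card_insert_of_notMem (by simp [hxy, hxz]),
        Finset.card_insert_of_notMem (by simp [hyz]), Finset.card_singleton]
  have hle : (G.neighborFinset a).card ≤ ({x, y, z} : Finset V).card := by
    rw [hcard]
    exact le_of_eq hdeg
  exact (Finset.eq_of_subset_of_card_le hsub hle).symm

/-- A finite connected cubic graph containing the configuration of
Lemma 8 (a 6-cycle `u1 v1 u2 v2 u3 v3` with pendant vertices `u i'` joined
crosswise to the `v`'s and to a common vertex `w`) is isomorphic to the
Petersen graph. -/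
theorem petersen_of_sixcycle_configuration
    {V : Type*} [Fintype V] [DecidableEq V] (G : SimpleGraph V) [DecidableRel G.Adj]
    (hconn : G.Connected) (hcubic : ∀ a : V, G.degree a = 3)
    (u1 v1 u2 v2 u3 v3 u1' u2' u3' w : V)
    (hdistinct : ([u1, v1, u2, v2, u3, v3, u1', u2', u3', w] : List V).Pairwise (· ≠ ·))
    (c1 : G.Adj u1 v1) (c2 : G.Adj v1 u2) (c3 : G.Adj u2 v2)
    (c4 : G.Adj v2 u3) (c5 : G.Adj u3 v3) (c6 : G.Adj v3 u1)
    (p1 : G.Adj u1 u1') (p2 : G.Adj u2 u2') (p3 : G.Adj u3 u3')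
    (q1 : G.Adj u1' v2) (q2 : G.Adj u2' v3) (q3 : G.Adj u3' v1)
    (r1 : G.Adj w u1') (r2 : G.Adj w u2') (r3 : G.Adj w u3') :
    Nonempty (G ≃g petersenGraph) := by
  classical
  let g : Fin 10 → V := ([u1, v1, u2, v2, u3, v3, u1', u2', u3', w] : List V).get
  have ginj : Function.Injective g :=
    List.nodup_iff_injective_get.mp hdistinct
  have hne : ∀ i j : Fin 10, i ≠ j → g i ≠ g j :=
    fun i j hij h => hij (ginj h)
  -- the ten neighborhood computations
  have n0 : G.neighborFinset (g 0) = {g 1, g 5, g 6} :=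
    nbhd_eq_of_degree_three G (hcubic _) (hne 1 5 (by decide)) (hne 1 6 (by decide))
      (hne 5 6 (by decide)) c1 c6.symm p1
  have n1 : G.neighborFinset (g 1) = {g 0, g 2, g 8} :=
    nbhd_eq_of_degree_three G (hcubic _) (hne 0 2 (by decide)) (hne 0 8 (by decide))
      (hne 2 8 (by decide)) c1.symm c2 q3.symm
  have n2 : G.neighborFinset (g 2) = {g 1, g 3, g 7} :=
    nbhd_eq_of_degree_three G (hcubic _) (hne 1 3 (by decide)) (hne 1 7 (by decide))
      (hne 3 7 (by decide)) c2.symm c3 p2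
  have n3 : G.neighborFinset (g 3) = {g 2, g 4, g 6} :=
    nbhd_eq_of_degree_three G (hcubic _) (hne 2 4 (by decide)) (hne 2 6 (by decide))
      (hne 4 6 (by decide)) c3.symm c4 q1.symm
  have n4 : G.neighborFinset (g 4) = {g 3, g 5, g 8} :=
    nbhd_eq_of_degree_three G (hcubic _) (hne 3 5 (by decide)) (hne 3 8 (by decide))
      (hne 5 8 (by decide)) c4.symm c5 p3
  have n5 : G.neighborFinset (g 5) = {g 4, g 0, g 7} :=
    nbhd_eq_of_degree_three G (hcubic _) (hne 4 0 (by decide)) (hne 4 7 (by decide))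
      (hne 0 7 (by decide)) c5.symm c6 q2.symm
  have n6 : G.neighborFinset (g 6) = {g 0, g 3, g 9} :=
    nbhd_eq_of_degree_three G (hcubic _) (hne 0 3 (by decide)) (hne 0 9 (by decide))
      (hne 3 9 (by decide)) p1.symm q1 r1.symm
  have n7 : G.neighborFinset (g 7) = {g 2, g 5, g 9} :=
    nbhd_eq_of_degree_three G (hcubic _) (hne 2 5 (by decide)) (hne 2 9 (by decide))
      (hne 5 9 (by decide)) p2.symm q2 r2.symm
  have n8 : G.neighborFinset (g 8) = {g 4, g 1, g 9} :=
    nbhd_eq_of_degree_three G (hcubic _) (hne 4 1 (by decide)) (hne 4 9 (by decide))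
      (hne 1 9 (by decide)) p3.symm q3 r3.symm
  have n9 : G.neighborFinset (g 9) = {g 6, g 7, g 8} :=
    nbhd_eq_of_degree_three G (hcubic _) (hne 6 7 (by decide)) (hne 6 8 (by decide))
      (hne 7 8 (by decide)) r1 r2 r3
  have nb : ∀ i : Fin 10,
      G.neighborFinset (g i) = {g (nborIdx i 0), g (nborIdx i 1), g (nborIdx i 2)} := by
    intro i
    fin_cases i
    · exact n0
    · exact n1
    · exact n2
    · exact n3
    · exact n4
    · exact n5
    · exact n6
    · exact n7
    · exact n8
    · exact n9
  -- closure under adjacency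
  have closed : ∀ (i : Fin 10) (b : V), G.Adj (g i) b → ∃ j : Fin 10, g j = b := by
    intro i b hb
    rw [← SimpleGraph.mem_neighborFinset, nb i] at hb
    simp only [Finset.mem_insert, Finset.mem_singleton] at hb
    rcases hb with rfl | rfl | rfl
    exacts [⟨_, rfl⟩, ⟨_, rfl⟩, ⟨_, rfl⟩]
  -- surjectivity from connectedness
  have gsurj : Function.Surjective g := by
    intro v
    obtain ⟨p⟩ := hconn.preconnected (g 0) v
    suffices H : ∀ {a b : V}, G.Walk a b → (∃ i, g i = a) → ∃ j, g j = b from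
      H p ⟨0, rfl⟩
    intro a b p
    induction p with
    | nil => exact id
    | cons hadj _ ih =>
      rintro ⟨i, rfl⟩
      exact ih (closed i _ hadj)
  -- the adjacency correspondence
  have key : ∀ i j : Fin 10, G.Adj (g i) (g j) ↔
      petersenGraph.Adj (petersenMap i) (petersenMap j) := by
    intro i j
    rw [← SimpleGraph.mem_neighborFinset, nb i]
    simp only [Finset.mem_insert, Finset.mem_singleton, ginj.eq_iff]
    exact petersen_key_iff i j
  let eV : Fin 10 ≃ V := Equiv.ofBijective g ⟨ginj, gsurj⟩
  let eP : Fin 10 ≃ {s : Finset (Fin 5) // s.card = 2} :=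
    Equiv.ofBijective petersenMap petersenMap_bij
  refine ⟨⟨eV.symm.trans eP, ?_⟩⟩
  intro a b
  obtain ⟨i, rfl⟩ := gsurj a
  obtain ⟨j, rfl⟩ := gsurj b
  have h1 : eV.symm (g i) = i := (Equiv.symm_apply_eq eV).mpr rfl
  have h2 : eV.symm (g j) = j := (Equiv.symm_apply_eq eV).mpr rfl
  rw [Equiv.trans_apply, Equiv.trans_apply, h1, h2]
  exact (key i j).symm
end
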